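/- arXiv:1106.1498 — 2 statements merged into one kernel-verified Lean document; each statement's English description precedes it below -/
import Mathlib

section
/- Let Λ be the operator ΛH = (1+u)(1+zu)(H(z;u)−H(z;0))/u on ℚ[u][[z]]. For every m ≥ 1, the (m+1)-fold iterate satisfies z·Λ^{(m+1)}((1+u)/(1+zu)^{m+1}) = ((1+u)(1+zu)/u)·(1 − (1+zu)^{m+1}/(1+u)) − (1−z)^{m+2}. -/
open Polynomial PowerSeries

/-- w = 1 + zu, as a power series in z with coefficients in ℚ[u]. -/
noncomputable def w : PowerSeries (Polynomial ℚ) :=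
  1 + PowerSeries.X * PowerSeries.C (R := Polynomial ℚ) Polynomial.X

/-- The operator Λ : H(z;u) ↦ (1+u)(1+zu)(H(z;u) − H(z;0))/u, acting on ℚ[u][[z]]. -/
noncomputable def Lam (H : PowerSeries (Polynomial ℚ)) : PowerSeries (Polynomial ℚ) :=
  PowerSeries.C (R := Polynomial ℚ) (1 + Polynomial.X) * w *
    PowerSeries.mk fun n =>
      (PowerSeries.coeff (R := Polynomial ℚ) n H
        - Polynomial.C ((PowerSeries.coeff (R := Polynomial ℚ) n H).eval 0)) /ₘ Polynomial.X

noncomputable section AuxLam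
open Finset

/-- u, as a power series. -/
noncomputable def uu : PowerSeries (Polynomial ℚ) := PowerSeries.C (R := Polynomial ℚ) Polynomial.X

/-- 1+u. -/
noncomputable def ou : PowerSeries (Polynomial ℚ) :=
  PowerSeries.C (R := Polynomial ℚ) (1 + Polynomial.X)

lemma ou_eq : ou = 1 + uu := by
  simp [ou, uu, map_add, map_one]

lemma hzu : PowerSeries.X * uu = w - 1 := by
  simp [w, uu]

/-- evaluation of the u-variable at 0, as a ring hom on ℚ[u][[z]]. -/
noncomputable def eps : PowerSeries (Polynomial ℚ) →+* PowerSeries (Polynomial ℚ) :=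
  PowerSeries.map ((Polynomial.C : ℚ →+* Polynomial ℚ).comp (Polynomial.evalRingHom 0))

lemma eps_X : eps PowerSeries.X = PowerSeries.X := PowerSeries.map_X _

lemma eps_u : eps uu = 0 := by
  simp [eps, uu, PowerSeries.map_C]

lemma coeff_eps (n : ℕ) (H : PowerSeries (Polynomial ℚ)) :
    PowerSeries.coeff (R := Polynomial ℚ) n (eps H)
      = Polynomial.C ((PowerSeries.coeff (R := Polynomial ℚ) n H).eval 0) := by
  simp [eps, PowerSeries.coeff_map]

/-- The key computation rule for `Lam`. -/
lemma lam_eq (H P Q : PowerSeries (Polynomial ℚ)) (h : uu * Q = H - P) (hP : eps P = P) :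
    Lam H = ou * w * Q := by
  have hEH : eps H = P := by
    have h2 := congrArg eps h
    rw [map_mul, eps_u, zero_mul, map_sub, hP] at h2
    linear_combination -h2
  have hmk : (PowerSeries.mk fun n =>
      (PowerSeries.coeff (R := Polynomial ℚ) n H
        - Polynomial.C ((PowerSeries.coeff (R := Polynomial ℚ) n H).eval 0)) /ₘ Polynomial.X) = Q := by
    ext n
    rw [PowerSeries.coeff_mk]
    have hc : Polynomial.C ((PowerSeries.coeff (R := Polynomial ℚ) n H).eval 0)
        = PowerSeries.coeff (R := Polynomial ℚ) n P := by
      rw [← coeff_eps, hEH]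
    have h3 := congrArg (PowerSeries.coeff (R := Polynomial ℚ) n) h
    rw [map_sub] at h3
    have h4 : PowerSeries.coeff (R := Polynomial ℚ) n (uu * Q)
        = Polynomial.X * PowerSeries.coeff (R := Polynomial ℚ) n Q := by
      simp [uu, PowerSeries.coeff_C_mul]
    rw [hc, ← h3, h4, Polynomial.mul_divByMonic_cancel_left _ Polynomial.monic_X]
  rw [Lam, hmk, ou]

end AuxLam

noncomputable section AuxCC
open Finset

/-- The coefficient series c_{k,r} ∈ ℚ[[z]] ⊂ ℚ[u][[z]]. -/
noncomputable def cc : ℕ → ℕ → PowerSeries (Polynomial ℚ)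
  | 0, _ => 0
  | k+1, r => cc k r - PowerSeries.X *
      ((1 - PowerSeries.X)^k + ∑ ρ ∈ Finset.range r, cc k (ρ+1))

lemma cc_zero (r : ℕ) : cc 0 r = 0 := rfl

lemma cc_succ (k r : ℕ) : cc (k+1) r = cc k r - PowerSeries.X *
    ((1 - PowerSeries.X)^k + ∑ ρ ∈ Finset.range r, cc k (ρ+1)) := rfl

/-- Identity B. -/
lemma ccB : ∀ k r : ℕ, cc (k+1) r = cc (k+1) (r+1)
    + PowerSeries.X * ∑ d ∈ Finset.range k, cc (d+1) (r+1) := by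
  intro k
  induction k with
  | zero => intro r; simp [cc_succ, cc_zero]
  | succ k ih =>
    intro r
    rw [cc_succ (k+1) r, cc_succ (k+1) (r+1), ih r, Finset.sum_range_succ (fun ρ => cc (k+1) (ρ+1)) r,
      Finset.sum_range_succ (fun d => cc (d+1) (r+1)) k]
    ring

lemma cc_r_zero : ∀ k : ℕ, cc k 0 = (1 - PowerSeries.X)^k - 1 := by
  intro k
  induction k with
  | zero => simp [cc_zero]
  | succ k ih =>
    rw [cc_succ, ih]
    simp [pow_succ]
    ring

lemma eps_cc : ∀ k r : ℕ, eps (cc k r) = cc k r := by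
  intro k
  induction k with
  | zero => intro r; simp [cc_zero]
  | succ k ih =>
    intro r
    rw [cc_succ, map_sub, map_mul, map_add, map_pow, map_sub, map_one, eps_X, map_sum]
    simp only [ih]

/-- double sum swap. -/
lemma swap_sum (F g : ℕ → PowerSeries (Polynomial ℚ)) :
    ∀ N : ℕ, ∑ j ∈ Finset.range N, F j * ∑ t ∈ Finset.range (j+1), g t
      = ∑ t ∈ Finset.range N, (∑ j ∈ Finset.range (N - t), F (t + j)) * g t := by
  intro N
  induction N with
  | zero => simp
  | succ N ih =>
    rw [Finset.sum_range_succ, ih, Finset.sum_range_succ]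
    have h1 : ∀ t ∈ Finset.range N,
        (∑ j ∈ Finset.range (N + 1 - t), F (t + j)) * g t
        = (∑ j ∈ Finset.range (N - t), F (t + j)) * g t + F N * g t := by
      intro t ht
      rw [Finset.mem_range] at ht
      have h2 : N + 1 - t = (N - t) + 1 := by omega
      rw [h2, Finset.sum_range_succ]
      have h3 : t + (N - t) = N := by omega
      rw [h3, add_mul]
    symm
    rw [Finset.sum_range_succ, Finset.sum_congr rfl h1, Finset.sum_add_distrib,
      ← Finset.mul_sum]
    have h4 : N + 1 - N = 1 := by omega
    rw [h4, Finset.sum_range_one, add_zero]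
    ring

/-- reflection. -/
lemma reflect_sum (F : ℕ → PowerSeries (Polynomial ℚ)) (M : ℕ) :
    ∑ j ∈ Finset.range M, F (M - j) = ∑ j ∈ Finset.range M, F (j+1) := by
  rw [← Finset.sum_range_reflect (fun j => F (j+1)) M]
  refine Finset.sum_congr rfl fun j hj => ?_
  rw [Finset.mem_range] at hj
  have h : M - j = M - 1 - j + 1 := by omega
  rw [h]

end AuxCC

noncomputable section AuxMain
open Finset

variable (wi : PowerSeries (Polynomial ℚ)) (hwi : w * wi = 1)

/-- The iterate closed form (inner part). -/
noncomputable def Sn (n k : ℕ) : PowerSeries (Polynomial ℚ) :=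
  (1 - PowerSeries.X)^k * wi^(n-k)
  + ∑ j ∈ Finset.range (n-k), cc k (n-k-j) * wi^j
  + ∑ e ∈ Finset.range (k-1), cc (k-1-e) (n-k) * w^(e+1)

/-- The witness for dividing by u. -/
noncomputable def Qn (n k : ℕ) : PowerSeries (Polynomial ℚ) :=
  (1 - PowerSeries.X)^k * (wi^(n-k) - PowerSeries.X * ∑ t ∈ Finset.range (n-k), wi^(t+1))
  + ∑ j ∈ Finset.range (n-k), cc k (n-k-j) *
      (wi^j - PowerSeries.X * ∑ t ∈ Finset.range j, wi^(t+1))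
  + ∑ e ∈ Finset.range (k-1), cc (k-1-e) (n-k) *
      (w^(e+1) + PowerSeries.X * ∑ i ∈ Finset.range (e+1), w^i)

/-- The u=0 part. -/
noncomputable def Pn (n k : ℕ) : PowerSeries (Polynomial ℚ) :=
  (1 - PowerSeries.X)^k
  + ∑ j ∈ Finset.range (n-k), cc k (n-k-j)
  + ∑ e ∈ Finset.range (k-1), cc (k-1-e) (n-k)

lemma eps_Pn (n k : ℕ) : eps (Pn n k) = Pn n k := by
  rw [Pn, map_add, map_add, map_pow, map_sub, map_one, eps_X, map_sum, map_sum]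
  simp only [eps_cc]

omit wi in
lemma L2 (e : ℕ) :
    uu * (w^e + PowerSeries.X * ∑ i ∈ Finset.range e, w^i) = ou * w^e - 1 := by
  have h1 : (w - 1) * ∑ i ∈ Finset.range e, w^i = w^e - 1 := by
    rw [mul_comm, geom_sum_mul]
  have h3 : uu * (w^e + PowerSeries.X * ∑ i ∈ Finset.range e, w^i)
      = uu * w^e + (PowerSeries.X * uu) * ∑ i ∈ Finset.range e, w^i := by ring
  rw [h3, hzu, h1, ou_eq]
  ring

section withwi
include hwi

lemma wwi (j : ℕ) : w * wi^(j+1) = wi^j := by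
  rw [pow_succ, ← mul_assoc, mul_comm w (wi^j), mul_assoc, hwi, mul_one]

lemma L1 (j : ℕ) :
    uu * (wi^j - PowerSeries.X * ∑ t ∈ Finset.range j, wi^(t+1)) = ou * wi^j - 1 := by
  have h1 : (w - 1) * ∑ t ∈ Finset.range j, wi^(t+1) = 1 - wi^j := by
    rw [Finset.mul_sum]
    have h2 : ∀ t ∈ Finset.range j, (w - 1) * wi^(t+1) = wi^t - wi^(t+1) := by
      intro t _
      rw [sub_mul, wwi wi hwi, one_mul]
    rw [Finset.sum_congr rfl h2, Finset.sum_range_sub' (fun t => wi^t) j, pow_zero]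
  have h3 : uu * (wi^j - PowerSeries.X * ∑ t ∈ Finset.range j, wi^(t+1))
      = uu * wi^j - (PowerSeries.X * uu) * ∑ t ∈ Finset.range j, wi^(t+1) := by ring
  rw [h3, hzu, h1, ou_eq]
  ring

lemma uQn (n k : ℕ) : uu * Qn wi n k = ou * Sn wi n k - Pn n k := by
  rw [Qn, Sn, Pn, mul_add, mul_add]
  have e1 : uu * ((1 - PowerSeries.X)^k *
      (wi^(n-k) - PowerSeries.X * ∑ t ∈ Finset.range (n-k), wi^(t+1)))
      = (1 - PowerSeries.X)^k * (ou * wi^(n-k) - 1) := by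
    rw [mul_left_comm, L1 wi hwi]
  have e2 : ∀ j ∈ Finset.range (n-k), uu * (cc k (n-k-j) *
      (wi^j - PowerSeries.X * ∑ t ∈ Finset.range j, wi^(t+1)))
      = cc k (n-k-j) * (ou * wi^j - 1) := by
    intro j _
    rw [mul_left_comm, L1 wi hwi]
  have e3 : ∀ e ∈ Finset.range (k-1), uu * (cc (k-1-e) (n-k) *
      (w^(e+1) + PowerSeries.X * ∑ i ∈ Finset.range (e+1), w^i))
      = cc (k-1-e) (n-k) * (ou * w^(e+1) - 1) := by
    intro e _
    rw [mul_left_comm, L2]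
  have e2' : uu * (∑ j ∈ Finset.range (n-k), cc k (n-k-j) *
      (wi^j - PowerSeries.X * ∑ t ∈ Finset.range j, wi^(t+1)))
      = ∑ j ∈ Finset.range (n-k), cc k (n-k-j) * (ou * wi^j - 1) := by
    rw [Finset.mul_sum]; exact Finset.sum_congr rfl e2
  have e3' : uu * (∑ e ∈ Finset.range (k-1), cc (k-1-e) (n-k) *
      (w^(e+1) + PowerSeries.X * ∑ i ∈ Finset.range (e+1), w^i))
      = ∑ e ∈ Finset.range (k-1), cc (k-1-e) (n-k) * (ou * w^(e+1) - 1) := by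
    rw [Finset.mul_sum]; exact Finset.sum_congr rfl e3
  rw [e1, e2', e3']
  have e4 : ∀ j ∈ Finset.range (n-k), cc k (n-k-j) * (ou * wi^j - 1)
      = ou * (cc k (n-k-j) * wi^j) - cc k (n-k-j) := by intro j _; ring
  have e5 : ∀ e ∈ Finset.range (k-1), cc (k-1-e) (n-k) * (ou * w^(e+1) - 1)
      = ou * (cc (k-1-e) (n-k) * w^(e+1)) - cc (k-1-e) (n-k) := by intro e _; ring
  rw [Finset.sum_congr rfl e4, Finset.sum_congr rfl e5,
    Finset.sum_sub_distrib, Finset.sum_sub_distrib, ← Finset.mul_sum, ← Finset.mul_sum]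
  ring

end withwi
end AuxMain

noncomputable section AuxKey
open Finset

lemma peel0 (M : ℕ) : ∀ k : ℕ, ∑ e ∈ Finset.range k, cc (k-e) M * w^(e+1)
    = cc k M * w + ∑ e ∈ Finset.range (k-1), cc (k-1-e) M * w^(e+2) := by
  intro k
  cases k with
  | zero => simp [cc_zero]
  | succ K =>
    rw [Finset.sum_range_succ' (fun e => cc (K+1-e) M * w^(e+1)) K]
    simp only [Nat.sub_zero, pow_one, Nat.add_sub_cancel]
    have h : ∀ e ∈ Finset.range K, cc (K+1-(e+1)) M * w^(e+1+1) = cc (K-e) M * w^(e+2) := by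
      intro e _
      have h' : K+1-(e+1) = K-e := by omega
      rw [h']
    rw [Finset.sum_congr rfl h]
    ring

lemma droplast (A : ℕ → PowerSeries (Polynomial ℚ)) : ∀ k : ℕ,
    ∑ e ∈ Finset.range k, (∑ d ∈ Finset.range (k-1-e), A d) * w^(e+1)
    = ∑ e ∈ Finset.range (k-1), (∑ d ∈ Finset.range (k-1-e), A d) * w^(e+1) := by
  intro k
  cases k with
  | zero => simp
  | succ K =>
    rw [Finset.sum_range_succ]
    have h : K + 1 - 1 - K = 0 := by omega
    rw [h]
    simp

lemma key (wi : PowerSeries (Polynomial ℚ)) (hwi : w * wi = 1) (n k : ℕ) (hk : k < n) :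
    w * Qn wi n k = Sn wi n (k+1) := by
  obtain ⟨N', h1⟩ : ∃ N', n - k = N' + 1 := ⟨n - k - 1, by omega⟩
  have h2 : n - (k+1) = N' := by omega
  have h3 : k + 1 - 1 = k := by omega
  rw [Qn, Sn, h1, h2, h3]
  -- LHS pieces
  have A1 : w * ((1 - PowerSeries.X)^k *
      (wi^(N'+1) - PowerSeries.X * ∑ t ∈ Finset.range (N'+1), wi^(t+1)))
      = (1 - PowerSeries.X)^(k+1) * wi^N'
        - PowerSeries.X * ((1 - PowerSeries.X)^k * ∑ t ∈ Finset.range N', wi^t) := by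
    have hw2 : w * ∑ t ∈ Finset.range (N'+1), wi^(t+1)
        = (∑ t ∈ Finset.range N', wi^t) + wi^N' := by
      rw [Finset.mul_sum, Finset.sum_congr rfl (fun t _ => wwi wi hwi t),
        Finset.sum_range_succ]
    calc w * ((1 - PowerSeries.X)^k *
          (wi^(N'+1) - PowerSeries.X * ∑ t ∈ Finset.range (N'+1), wi^(t+1)))
        = (1 - PowerSeries.X)^k * (w * wi^(N'+1))
          - PowerSeries.X * ((1 - PowerSeries.X)^k *
            (w * ∑ t ∈ Finset.range (N'+1), wi^(t+1))) := by ring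
      _ = _ := by
          rw [hw2, wwi wi hwi N', pow_succ]
          ring
  have A2 : w * (∑ j ∈ Finset.range (N'+1), cc k (N'+1-j) *
      (wi^j - PowerSeries.X * ∑ t ∈ Finset.range j, wi^(t+1)))
      = cc k (N'+1) * w + (∑ j ∈ Finset.range N', cc k (N'-j) * wi^j
        - PowerSeries.X * ∑ j ∈ Finset.range N',
            (∑ ρ ∈ Finset.range (N'-j), cc k (ρ+1)) * wi^j) := by
    rw [Finset.mul_sum, Finset.sum_range_succ' (fun j => w * (cc k (N'+1-j) *
      (wi^j - PowerSeries.X * ∑ t ∈ Finset.range j, wi^(t+1)))) N']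
    have hf0 : w * (cc k (N'+1-0) * (wi^0 - PowerSeries.X * ∑ t ∈ Finset.range 0, wi^(t+1)))
        = cc k (N'+1) * w := by
      simp only [Nat.sub_zero, pow_zero, Finset.range_zero, Finset.sum_empty, mul_zero,
        sub_zero, mul_one]
      ring
    have hstep : ∀ j ∈ Finset.range N', w * (cc k (N'+1-(j+1)) *
        (wi^(j+1) - PowerSeries.X * ∑ t ∈ Finset.range (j+1), wi^(t+1)))
        = cc k (N'-j) * wi^j
          - PowerSeries.X * (cc k (N'-j) * ∑ t ∈ Finset.range (j+1), wi^t) := by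
      intro j _
      have hj1 : N'+1-(j+1) = N'-j := by omega
      have hw2 : w * ∑ t ∈ Finset.range (j+1), wi^(t+1) = ∑ t ∈ Finset.range (j+1), wi^t := by
        rw [Finset.mul_sum]
        exact Finset.sum_congr rfl (fun t _ => wwi wi hwi t)
      calc w * (cc k (N'+1-(j+1)) *
            (wi^(j+1) - PowerSeries.X * ∑ t ∈ Finset.range (j+1), wi^(t+1)))
          = cc k (N'+1-(j+1)) * (w * wi^(j+1))
            - PowerSeries.X * (cc k (N'+1-(j+1)) *
              (w * ∑ t ∈ Finset.range (j+1), wi^(t+1))) := by ring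
        _ = _ := by rw [hj1, hw2, wwi wi hwi j]
    rw [Finset.sum_congr rfl hstep, hf0, Finset.sum_sub_distrib, ← Finset.mul_sum,
      swap_sum (fun j => cc k (N'-j)) (fun t => wi^t) N']
    have hin : ∀ t ∈ Finset.range N', (∑ j ∈ Finset.range (N'-t), cc k (N'-(t+j))) * wi^t
        = (∑ ρ ∈ Finset.range (N'-t), cc k (ρ+1)) * wi^t := by
      intro t _
      congr 1
      have hs : ∀ j ∈ Finset.range (N'-t), cc k (N'-(t+j)) = cc k ((N'-t)-j) := by
        intro j _
        have h' : N'-(t+j) = (N'-t)-j := by omega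
        rw [h']
      rw [Finset.sum_congr rfl hs, reflect_sum (fun ρ => cc k ρ) (N'-t)]
    rw [Finset.sum_congr rfl hin]
    ring
  have A3 : w * (∑ e ∈ Finset.range (k-1), cc (k-1-e) (N'+1) *
      (w^(e+1) + PowerSeries.X * ∑ i ∈ Finset.range (e+1), w^i))
      = ∑ e ∈ Finset.range (k-1), cc (k-1-e) (N'+1) * w^(e+2)
        + PowerSeries.X * ∑ i ∈ Finset.range (k-1),
            (∑ d ∈ Finset.range (k-1-i), cc (d+1) (N'+1)) * w^(i+1) := by
    rw [Finset.mul_sum]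
    have hstep : ∀ e ∈ Finset.range (k-1), w * (cc (k-1-e) (N'+1) *
        (w^(e+1) + PowerSeries.X * ∑ i ∈ Finset.range (e+1), w^i))
        = cc (k-1-e) (N'+1) * w^(e+2)
          + PowerSeries.X * (cc (k-1-e) (N'+1) * ∑ i ∈ Finset.range (e+1), w^(i+1)) := by
      intro e _
      have hw2 : w * ∑ i ∈ Finset.range (e+1), w^i = ∑ i ∈ Finset.range (e+1), w^(i+1) := by
        rw [Finset.mul_sum]
        exact Finset.sum_congr rfl (fun i _ => by rw [pow_succ, mul_comm])
      calc w * (cc (k-1-e) (N'+1) * (w^(e+1) + PowerSeries.X * ∑ i ∈ Finset.range (e+1), w^i))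
          = cc (k-1-e) (N'+1) * (w * w^(e+1))
            + PowerSeries.X * (cc (k-1-e) (N'+1) * (w * ∑ i ∈ Finset.range (e+1), w^i)) := by
            ring
        _ = _ := by
            rw [hw2]
            rw [← pow_succ']
    rw [Finset.sum_congr rfl hstep, Finset.sum_add_distrib, ← Finset.mul_sum,
      swap_sum (fun e => cc (k-1-e) (N'+1)) (fun i => w^(i+1)) (k-1)]
    have hin : ∀ i ∈ Finset.range (k-1),
        (∑ e ∈ Finset.range (k-1-i), cc (k-1-(i+e)) (N'+1)) * w^(i+1)
        = (∑ d ∈ Finset.range (k-1-i), cc (d+1) (N'+1)) * w^(i+1) := by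
      intro i _
      congr 1
      have hs : ∀ e ∈ Finset.range (k-1-i), cc (k-1-(i+e)) (N'+1) = cc ((k-1-i)-e) (N'+1) := by
        intro e _
        have h' : k-1-(i+e) = (k-1-i)-e := by omega
        rw [h']
      rw [Finset.sum_congr rfl hs, reflect_sum (fun d => cc d (N'+1)) (k-1-i)]
    rw [Finset.sum_congr rfl hin]
  -- RHS pieces
  have B2 : (∑ j ∈ Finset.range N', cc (k+1) (N'-j) * wi^j)
      = ∑ j ∈ Finset.range N', cc k (N'-j) * wi^j
        - PowerSeries.X * ((1 - PowerSeries.X)^k * ∑ j ∈ Finset.range N', wi^j)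
        - PowerSeries.X * ∑ j ∈ Finset.range N',
            (∑ ρ ∈ Finset.range (N'-j), cc k (ρ+1)) * wi^j := by
    have hterm : ∀ j ∈ Finset.range N', cc (k+1) (N'-j) * wi^j
        = cc k (N'-j) * wi^j - (PowerSeries.X * (1 - PowerSeries.X)^k) * wi^j
          - PowerSeries.X * ((∑ ρ ∈ Finset.range (N'-j), cc k (ρ+1)) * wi^j) := by
      intro j _
      rw [cc_succ]
      ring
    rw [Finset.sum_congr rfl hterm, Finset.sum_sub_distrib, Finset.sum_sub_distrib,
      ← Finset.mul_sum, ← Finset.mul_sum]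
    ring
  have B3 : (∑ e ∈ Finset.range k, cc (k-e) N' * w^(e+1))
      = cc k (N'+1) * w + ∑ e ∈ Finset.range (k-1), cc (k-1-e) (N'+1) * w^(e+2)
        + PowerSeries.X * ∑ e ∈ Finset.range (k-1),
            (∑ d ∈ Finset.range (k-1-e), cc (d+1) (N'+1)) * w^(e+1) := by
    have hterm : ∀ e ∈ Finset.range k, cc (k-e) N' * w^(e+1)
        = cc (k-e) (N'+1) * w^(e+1)
          + PowerSeries.X * ((∑ d ∈ Finset.range (k-1-e), cc (d+1) (N'+1)) * w^(e+1)) := by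
      intro e he
      rw [Finset.mem_range] at he
      have hke : k - e = (k-1-e) + 1 := by omega
      rw [hke, ccB (k-1-e) N']
      ring
    rw [Finset.sum_congr rfl hterm, Finset.sum_add_distrib, ← Finset.mul_sum,
      peel0 (N'+1) k, droplast (fun d => cc (d+1) (N'+1)) k]
  rw [mul_add, mul_add, A1, A2, A3, B2, B3]
  ring

end AuxKey

noncomputable section AuxFinal
open Finset

lemma iterate_formula (wi : PowerSeries (Polynomial ℚ)) (hwi : w * wi = 1) (n : ℕ) :
    ∀ k, k ≤ n → Lam^[k] (ou * wi^n) = ou * Sn wi n k := by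
  intro k
  induction k with
  | zero =>
    intro _
    rw [Function.iterate_zero_apply, Sn]
    simp [cc_zero]
  | succ k ih =>
    intro hk1
    rw [Function.iterate_succ_apply', ih (by omega),
      lam_eq (ou * Sn wi n k) (Pn n k) (Qn wi n k) (uQn wi hwi n k) (eps_Pn n k),
      mul_assoc, key wi hwi n k (by omega)]

lemma final_id (n : ℕ) (hn : 1 ≤ n) :
    uu * (PowerSeries.X * (ou * ((1 - PowerSeries.X)^n
      + ∑ e ∈ Finset.range (n-1), ((1 - PowerSeries.X)^(n-1-e) - 1) * w^(e+1))))
    = w * (ou - w^n) - uu * (1 - PowerSeries.X)^(n+1) := by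
  have hXou : PowerSeries.X * ou = w - (1 - PowerSeries.X) := by
    rw [ou_eq, mul_add, mul_one, hzu]
    ring
  -- telescoping
  have htel : ∑ e ∈ Finset.range (n-1),
      (((1 - PowerSeries.X)^(n-(e+1)) - 1) * w^(e+1+1)
        - ((1 - PowerSeries.X)^(n-e) - 1) * w^(e+1))
      = ((1 - PowerSeries.X)^(n-(n-1)) - 1) * w^(n-1+1)
        - ((1 - PowerSeries.X)^(n-0) - 1) * w^(0+1) :=
    Finset.sum_range_sub (fun e => ((1 - PowerSeries.X)^(n-e) - 1) * w^(e+1)) (n-1)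
  have h4 : n - (n-1) = 1 := by omega
  have h5 : n - 1 + 1 = n := by omega
  rw [h4, h5, Nat.sub_zero, pow_one] at htel
  have hwA : (w - (1 - PowerSeries.X)) * ((1 - PowerSeries.X)^n
      + ∑ e ∈ Finset.range (n-1), ((1 - PowerSeries.X)^(n-1-e) - 1) * w^(e+1))
      = w - (1 - PowerSeries.X)^(n+1)
        + ((1 - PowerSeries.X) - 1) * ∑ e ∈ Finset.range n, w^(e+1) := by
    have hterm : ∀ e ∈ Finset.range (n-1),
        (w - (1 - PowerSeries.X)) * (((1 - PowerSeries.X)^(n-1-e) - 1) * w^(e+1))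
        = (((1 - PowerSeries.X)^(n-(e+1)) - 1) * w^(e+1+1)
            - ((1 - PowerSeries.X)^(n-e) - 1) * w^(e+1))
          + ((1 - PowerSeries.X) - 1) * w^(e+1) := by
      intro e he
      rw [Finset.mem_range] at he
      have e1 : n - (e+1) = n - 1 - e := by omega
      have e2 : n - e = (n - 1 - e) + 1 := by omega
      rw [e1, e2, pow_succ]
      ring
    rw [mul_add, Finset.mul_sum, Finset.sum_congr rfl hterm, Finset.sum_add_distrib, htel,
      ← Finset.mul_sum]
    have h6 : ∑ e ∈ Finset.range n, w^(e+1)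
        = (∑ e ∈ Finset.range (n-1), w^(e+1)) + w^n := by
      have h7 : n = (n-1) + 1 := by omega
      conv_lhs => rw [h7]
      rw [Finset.sum_range_succ, h5]
    rw [h6, pow_succ]
    ring
  have hgeom : (1 - w) * ∑ e ∈ Finset.range n, w^(e+1) = w - w^(n+1) := by
    have h8 : ∑ e ∈ Finset.range n, w^(e+1) = w * ∑ e ∈ Finset.range n, w^e := by
      rw [Finset.mul_sum]
      exact Finset.sum_congr rfl (fun e _ => by rw [pow_succ, mul_comm])
    have h9 := geom_sum_mul w n
    calc (1 - w) * ∑ e ∈ Finset.range n, w^(e+1)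
        = -((∑ e ∈ Finset.range n, w^e) * (w - 1)) * w := by rw [h8]; ring
      _ = -(w^n - 1) * w := by rw [h9]
      _ = w - w^(n+1) := by rw [pow_succ]; ring
  have hstart : uu * (PowerSeries.X * (ou * ((1 - PowerSeries.X)^n
      + ∑ e ∈ Finset.range (n-1), ((1 - PowerSeries.X)^(n-1-e) - 1) * w^(e+1))))
      = uu * ((PowerSeries.X * ou) * ((1 - PowerSeries.X)^n
      + ∑ e ∈ Finset.range (n-1), ((1 - PowerSeries.X)^(n-1-e) - 1) * w^(e+1))) := by ring
  rw [hstart, hXou, hwA]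
  have huX : uu * (((1 - PowerSeries.X) - 1) * ∑ e ∈ Finset.range n, w^(e+1))
      = (1 - w) * ∑ e ∈ Finset.range n, w^(e+1) := by
    have : uu * ((1 - PowerSeries.X) - 1) = 1 - w := by
      have := hzu
      ring_nf
      ring_nf at this
      linear_combination -this
    rw [← mul_assoc, this]
  rw [mul_add, huX, hgeom, ou_eq]
  ring

end AuxFinal


/-- For m ≥ 1, z·Λ^{(m+1)}((1+u)/(1+zu)^{m+1})
= ((1+u)(1+zu)/u)·(1 − (1+zu)^{m+1}/(1+u)) − (1−z)^{m+2}.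
Here `wi` = 1/(1+zu), and `G` = ((1+u) − (1+zu)^{m+1})/u, characterized by u·G = (1+u) − w^{m+1},
so that the right-hand side equals w·G − (1−z)^{m+2}. -/
theorem Lam_iterate_main (m : ℕ) (hm : 1 ≤ m)
    (wi : PowerSeries (Polynomial ℚ)) (hwi : w * wi = 1)
    (G : PowerSeries (Polynomial ℚ))
    (hG : PowerSeries.C (R := Polynomial ℚ) Polynomial.X * G
        = PowerSeries.C (R := Polynomial ℚ) (1 + Polynomial.X) - w^(m+1)) :
    PowerSeries.X * (Lam^[m+1] (PowerSeries.C (R := Polynomial ℚ) (1 + Polynomial.X) * wi^(m+1)))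
      = w * G - (1 - PowerSeries.X)^(m+2) := by
  have hou : PowerSeries.C (R := Polynomial ℚ) (1 + Polynomial.X) = ou := rfl
  have huu : PowerSeries.C (R := Polynomial ℚ) Polynomial.X = uu := rfl
  set n := m + 1 with hn
  rw [hou, iterate_formula wi hwi n n le_rfl]
  have hSn : Sn wi n n = (1 - PowerSeries.X)^n
      + ∑ e ∈ Finset.range (n-1), ((1 - PowerSeries.X)^(n-1-e) - 1) * w^(e+1) := by
    rw [Sn, Nat.sub_self]
    simp only [pow_zero, mul_one, Finset.range_zero, Finset.sum_empty, add_zero]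
    congr 1
    refine Finset.sum_congr rfl fun e _ => ?_
    rw [cc_r_zero]
  rw [hSn]
  have hu : uu ≠ 0 := by
    intro h
    have h0 := congrArg (PowerSeries.coeff (R := Polynomial ℚ) 0) h
    simp [uu] at h0
  refine mul_left_cancel₀ hu ?_
  rw [mul_sub, ← mul_assoc uu w G, mul_comm uu w, mul_assoc, huu] at *
  rw [hG]
  have := final_id n (by omega)
  have hmm : m + 2 = n + 1 := by omega
  rw [hmm]
  exact this
end

section
/- Let P and Q be Dyck paths of size n with distance functions D_P and D_Q (where D_P(i) is the size of the excursion of the i-th up step of P). Then P ≤ Q in the Tamari lattice T_n if and only if D_P(i) ≤ D_Q(i) for all i in {1,…,n}, where the Tamari order is the reflexive-transitive closure of the rotation relation: Q covers P when Q is obtained from P by swapping some down step d with the excursion of the up step immediately following d. -/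
/-- A Dyck word: a list over Bool (`true` = up step U, `false` = down step D) with equally
many U's and D's, every prefix having at least as many U's as D's. -/
def IsDyckWord (w : List Bool) : Prop :=
  w.count true = w.count false ∧ ∀ k, (w.take k).count false ≤ (w.take k).count true

/-- The length (number of steps) of the excursion of the up step at position j of w:
the length of the shortest nonempty factor of w starting at position j that is a Dyck word. -/
noncomputable def excLen (w : List Bool) (j : ℕ) : ℕ :=
  sInf {L | 0 < L ∧ IsDyckWord ((w.drop j).take L)}

/-- The positions of the up steps of w, in increasing order. -/
def upPos (w : List Bool) : List ℕ :=
  (List.range w.length).filter fun j => w.getD j false = true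

/-- The distance function: `distFn w i` is the size (number of up steps, i.e. half the
length) of the excursion of the (i+1)-st up step of w. -/
noncomputable def distFn (w : List Bool) (i : ℕ) : ℕ :=
  excLen w ((upPos w).getD i 0) / 2

/-- The Tamari rotation (covering relation): Q is obtained from P by swapping a down step d
with the excursion S of the up step immediately following d.  The excursion is the shortest
Dyck factor starting there, i.e. a nonempty Dyck word none of whose proper nonempty prefixes
is a Dyck word. -/
def Rotation (P Q : List Bool) : Prop :=
  ∃ A S B : List Bool, IsDyckWord S ∧ S ≠ [] ∧
    (∀ k, 0 < k → k < S.length → ¬ IsDyckWord (S.take k)) ∧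
    P = A ++ false :: (S ++ B) ∧ Q = A ++ S ++ false :: B


namespace Tam

/-- number of `true`s among the first `m` entries -/
def cntT (w : List Bool) (m : ℕ) : ℕ := (w.take m).count true
def cntF (w : List Bool) (m : ℕ) : ℕ := (w.take m).count false

noncomputable def ht (w : List Bool) (m : ℕ) : ℤ := (cntT w m : ℤ) - (cntF w m : ℤ)

lemma cnt_len (w : List Bool) : ∀ m, cntT w m + cntF w m = min m w.length := by
  intro m
  simp only [cntT, cntF]
  induction w generalizing m with
  | nil => simp
  | cons a l ih =>
    cases m with
    | zero => simp
    | succ m =>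
      have h := ih m
      rcases Nat.le_total m l.length with h1|h1 <;>
        cases a <;> simp only [List.take_succ_cons, List.length_cons, List.count_cons] <;>
        simp <;> omega

lemma cntT_succ (w : List Bool) (m : ℕ) (hm : m < w.length) :
    cntT w (m+1) = cntT w m + (if w.getD m false = true then 1 else 0) := by
  simp only [cntT, List.take_succ, List.getElem?_eq_getElem hm]
  rw [List.getD_eq_getElem w false hm]
  cases h : w[m] <;> simp [List.count_append, h]

lemma cntF_succ (w : List Bool) (m : ℕ) (hm : m < w.length) :
    cntF w (m+1) = cntF w m + (if w.getD m false = true then 0 else 1) := by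
  simp only [cntF, List.take_succ, List.getElem?_eq_getElem hm]
  rw [List.getD_eq_getElem w false hm]
  cases h : w[m] <;> simp [List.count_append, h]

lemma cnt_stop (w : List Bool) (m : ℕ) (hm : w.length ≤ m) :
    cntT w m = cntT w w.length ∧ cntF w m = cntF w w.length := by
  simp [cntT, cntF, List.take_of_length_le hm, List.take_length]

lemma cntT_mono (w : List Bool) : Monotone (cntT w) := by
  intro x y hxy
  have h : w.take x = (w.take y).take x := by rw [List.take_take, Nat.min_eq_left hxy]
  simp only [cntT, h]
  exact (List.take_sublist _ _).count_le _

lemma cntF_mono (w : List Bool) : Monotone (cntF w) := by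
  intro x y hxy
  have h : w.take x = (w.take y).take x := by rw [List.take_take, Nat.min_eq_left hxy]
  simp only [cntF, h]
  exact (List.take_sublist _ _).count_le _

lemma ht_zero (w : List Bool) : ht w 0 = 0 := by simp [ht, cntT, cntF]

lemma ht_step (w : List Bool) (m : ℕ) (hm : m < w.length) :
    ht w (m+1) = ht w m + (if w.getD m false = true then 1 else -1) := by
  simp only [ht, cntT_succ w m hm, cntF_succ w m hm]
  split <;> push_cast <;> ring

lemma ht_stop (w : List Bool) (m : ℕ) (hm : w.length ≤ m) : ht w m = ht w w.length := by
  simp [ht, cntT, cntF, List.take_of_length_le hm]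

lemma ht_up (w : List Bool) (m : ℕ) (h : ht w m < ht w (m+1)) :
    m < w.length ∧ w.getD m false = true := by
  by_cases hm : m < w.length
  · refine ⟨hm, ?_⟩
    by_contra hc
    rw [ht_step w m hm, if_neg hc] at h; omega
  · exfalso
    rw [ht_stop w m (by omega), ht_stop w (m+1) (by omega)] at h; omega

lemma ht_down (w : List Bool) (m : ℕ) (h : ht w (m+1) < ht w m) :
    m < w.length ∧ w.getD m false = false := by
  by_cases hm : m < w.length
  · refine ⟨hm, ?_⟩
    by_contra hc
    rw [ht_step w m hm, if_pos (by simpa using hc)] at h; omega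
  · exfalso
    rw [ht_stop w m (by omega), ht_stop w (m+1) (by omega)] at h; omega

lemma ht_step_up (w : List Bool) (m : ℕ) (hm : m < w.length) (h : w.getD m false = true) :
    ht w (m+1) = ht w m + 1 := by rw [ht_step w m hm, if_pos h]

lemma ht_step_down (w : List Bool) (m : ℕ) (hm : m < w.length) (h : w.getD m false = false) :
    ht w (m+1) = ht w m - 1 := by rw [ht_step w m hm, if_neg (by simp_all)]; ring

lemma ht_step_abs (w : List Bool) (m : ℕ) : ht w m - 1 ≤ ht w (m+1) ∧ ht w (m+1) ≤ ht w m + 1 := by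
  by_cases hm : m < w.length
  · rw [ht_step w m hm]; split <;> omega
  · rw [ht_stop w m (by omega), ht_stop w (m+1) (by omega)]; omega

lemma isDyckWord_iff_ht (w : List Bool) :
    IsDyckWord w ↔ ht w w.length = 0 ∧ ∀ m, 0 ≤ ht w m := by
  constructor
  · rintro ⟨h1, h2⟩
    constructor
    · simp only [ht, cntT, cntF, List.take_length]; omega
    · intro m; have := h2 m; simp only [ht, cntT, cntF]; omega
  · rintro ⟨h1, h2⟩
    constructor
    · simp only [ht, cntT, cntF, List.take_length] at h1; omega
    · intro m; have := h2 m; simp only [ht, cntT, cntF] at this; omega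

lemma cntT_slice (w : List Bool) (j t : ℕ) :
    ((w.drop j).take t).count true = cntT w (j+t) - cntT w j := by
  have h1 : (w.drop j).take t = (w.take (j+t)).drop j := List.take_drop ..
  have h2 : w.take (j+t) = (w.take (j+t)).take j ++ (w.take (j+t)).drop j :=
    (List.take_append_drop _ _).symm
  have h3 : (w.take (j+t)).take j = w.take j := by
    rw [List.take_take, Nat.min_eq_left (by omega)]
  have h4 : cntT w (j+t) = cntT w j + ((w.take (j+t)).drop j).count true := by
    conv_lhs => rw [cntT, h2]
    rw [List.count_append, h3]; rfl
  rw [h1]; omega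

lemma cntF_slice (w : List Bool) (j t : ℕ) :
    ((w.drop j).take t).count false = cntF w (j+t) - cntF w j := by
  have h1 : (w.drop j).take t = (w.take (j+t)).drop j := List.take_drop ..
  have h2 : w.take (j+t) = (w.take (j+t)).take j ++ (w.take (j+t)).drop j :=
    (List.take_append_drop _ _).symm
  have h3 : (w.take (j+t)).take j = w.take j := by
    rw [List.take_take, Nat.min_eq_left (by omega)]
  have h4 : cntF w (j+t) = cntF w j + ((w.take (j+t)).drop j).count false := by
    conv_lhs => rw [cntF, h2]
    rw [List.count_append, h3]; rfl
  rw [h1]; omega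

lemma slice_balanced_iff (w : List Bool) (j L : ℕ) :
    (((w.drop j).take L).count true = ((w.drop j).take L).count false) ↔
      ht w (j+L) = ht w j := by
  rw [cntT_slice, cntF_slice]
  have h1 := cntT_mono w (Nat.le_add_right j L)
  have h2 := cntF_mono w (Nat.le_add_right j L)
  simp only [ht]; omega

lemma isDyckWord_slice (w : List Bool) (j L : ℕ) :
    IsDyckWord ((w.drop j).take L) ↔
      (ht w (j+L) = ht w j ∧ ∀ t ≤ L, ht w j ≤ ht w (j+t)) := by
  constructor
  · rintro ⟨h1, h2⟩
    refine ⟨(slice_balanced_iff w j L).1 h1, fun t ht' => ?_⟩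
    have := h2 t
    rw [List.take_take, Nat.min_eq_left ht'] at this
    rw [cntT_slice, cntF_slice] at this
    have h3 := cntT_mono w (Nat.le_add_right j t)
    have h4 := cntF_mono w (Nat.le_add_right j t)
    simp only [ht]; omega
  · rintro ⟨h1, h2⟩
    refine ⟨(slice_balanced_iff w j L).2 h1, fun k => ?_⟩
    rw [List.take_take]
    rw [cntT_slice, cntF_slice]
    have ht' := h2 (min k L) (min_le_right _ _)
    have h3 := cntT_mono w (Nat.le_add_right j (min k L))
    have h4 := cntF_mono w (Nat.le_add_right j (min k L))
    simp only [ht] at ht'; omega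

lemma upPos_eq (w : List Bool) :
    upPos w = (List.range w.length).filter (fun j => w.getD j false) := by
  simp [upPos]

lemma filterRange_length (w : List Bool) (m : ℕ) :
    ((List.range m).filter (fun j => w.getD j false)).length = cntT w m := by
  induction m with
  | zero => simp [cntT]
  | succ m ih =>
    rw [List.range_succ, List.filter_append, List.filter_singleton, List.length_append]
    by_cases hm : m < w.length
    · rw [cntT_succ w m hm]
      by_cases hq : w.getD m false = true
      · rw [hq, if_pos rfl]
        have e : (bif true then [m] else ([] : List ℕ)) = [m] := rfl
        rw [e, ih]; rfl
      · simp only [Bool.not_eq_true] at hq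
        rw [hq, if_neg (by simp)]
        have e : (bif false then [m] else ([] : List ℕ)) = [] := rfl
        rw [e, ih]; rfl
    · have h1 : w.getD m false = false := List.getD_eq_default _ _ (by omega)
      have h2 : cntT w (m+1) = cntT w m := by
        rw [(cnt_stop w (m+1) (by omega)).1, (cnt_stop w m (by omega)).1]
      rw [h1, h2]
      have e : (bif false then [m] else ([] : List ℕ)) = [] := rfl
      rw [e, ih]; rfl

lemma length_upPos (w : List Bool) : (upPos w).length = w.count true := by
  rw [upPos_eq, filterRange_length]; simp [cntT]

def pos (w : List Bool) (i : ℕ) : ℕ := (upPos w).getD i 0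

lemma pos_char (w : List Bool) (i : ℕ) (h : i < w.count true) :
    w.getD (pos w i) false = true ∧ cntT w (pos w i) = i := by
  have h' : i < (upPos w).length := by rw [length_upPos]; exact h
  rw [pos, upPos_eq] at *
  clear h
  generalize hM : w.length = M at h' ⊢
  clear hM
  induction M generalizing i with
  | zero => simp at h'
  | succ m ih =>
    have hsplit : (List.range (m+1)).filter (fun j => w.getD j false)
        = ((List.range m).filter (fun j => w.getD j false))
          ++ (if w.getD m false then [m] else []) := by
      rw [List.range_succ, List.filter_append, List.filter_singleton]
      cases hq : w.getD m false <;> simp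
    rw [hsplit] at h' ⊢
    set l := (List.range m).filter (fun j => w.getD j false) with hl
    rcases Nat.lt_or_ge i l.length with hlt | hge
    · rw [List.getD_append _ _ _ _ hlt]
      exact ih i hlt
    · cases hq : w.getD m false with
      | false =>
        rw [hq] at h'
        simp only [Bool.false_eq_true, reduceIte, List.append_nil] at h'
        exact absurd h' (by omega)
      | true =>
        rw [hq] at h'
        simp only [reduceIte] at h' ⊢
        simp only [List.length_append, List.length_cons, List.length_nil] at h'
        have hi : i = l.length := by omega
        rw [List.getD_append_right _ _ _ _ hge, hi]
        simp only [Nat.sub_self, List.getD_cons_zero]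
        refine ⟨hq, ?_⟩
        rw [hl, filterRange_length] at hi
        omega

lemma pos_lt_length (w : List Bool) (i : ℕ) (h : i < w.count true) : pos w i < w.length := by
  by_contra hc
  have h2 := (pos_char w i h).1
  rw [List.getD_eq_default _ _ (by omega)] at h2
  exact absurd h2 (by simp)

lemma pos_unique (w : List Bool) (i p : ℕ) (h : i < w.count true)
    (h1 : w.getD p false = true) (h2 : cntT w p = i) : pos w i = p := by
  have hc := pos_char w i h
  have hl := pos_lt_length w i h
  have hp : p < w.length := by
    by_contra hc2
    rw [List.getD_eq_default _ _ (by omega)] at h1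
    exact absurd h1 (by simp)
  rcases Nat.lt_trichotomy (pos w i) p with hlt | heq | hgt
  · have h3 := cntT_succ w (pos w i) hl
    rw [hc.1, if_pos rfl] at h3
    have hm := cntT_mono w (show pos w i + 1 ≤ p by omega)
    omega
  · exact heq
  · have h3 := cntT_succ w p hp
    rw [h1, if_pos rfl] at h3
    have hm := cntT_mono w (show p + 1 ≤ pos w i by omega)
    omega

lemma pos_lt_iff (w : List Bool) (k m : ℕ) (h : k < w.count true) :
    pos w k < m ↔ k < cntT w m := by
  constructor
  · intro hlt
    have h3 := cntT_succ w (pos w k) (pos_lt_length w k h)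
    rw [(pos_char w k h).1, if_pos rfl, (pos_char w k h).2] at h3
    have hm := cntT_mono w (show pos w k + 1 ≤ m by omega)
    omega
  · intro hlt
    by_contra hc
    have hm := cntT_mono w (show m ≤ pos w k by omega)
    rw [(pos_char w k h).2] at hm; omega

lemma pos_strictMono (w : List Bool) (i j : ℕ) (hi : i < j) (hj : j < w.count true) :
    pos w i < pos w j := by
  rw [pos_lt_iff w i _ (by omega), (pos_char w j hj).2]
  exact hi

lemma ht_cnt (w : List Bool) (m : ℕ) (hm : m ≤ w.length) :
    ht w m = 2 * (cntT w m : ℤ) - m := by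
  have h1 := cnt_len w m
  rw [Nat.min_eq_left hm] at h1
  simp only [ht]; omega

noncomputable def fr (w : List Bool) (j : ℕ) : ℕ := sInf {t | j < t ∧ ht w t ≤ ht w j}

lemma sInf_eq_of {s : Set ℕ} {m : ℕ} (h : m ∈ s) (h2 : ∀ x ∈ s, m ≤ x) : sInf s = m :=
  le_antisymm (Nat.sInf_le h) (h2 _ (Nat.sInf_mem ⟨m, h⟩))

lemma fr_spec (w : List Bool) (j : ℕ) (hw : IsDyckWord w) (hj : j < w.length)
    (hu : w.getD j false = true) :
    j + 1 < fr w j ∧ fr w j ≤ w.length ∧ ht w (fr w j) = ht w j ∧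
      ∀ t, j < t → t < fr w j → ht w j < ht w t := by
  obtain ⟨hz, hnn⟩ := (isDyckWord_iff_ht w).1 hw
  have hne : w.length ∈ {t | j < t ∧ ht w t ≤ ht w j} := ⟨hj, by rw [hz]; exact hnn j⟩
  have hmem : fr w j ∈ {t | j < t ∧ ht w t ≤ ht w j} := Nat.sInf_mem ⟨_, hne⟩
  have hle : fr w j ≤ w.length := Nat.sInf_le hne
  have hint : ∀ t, j < t → t < fr w j → ht w j < ht w t := by
    intro t h1 h2
    by_contra hc
    have h4 : fr w j ≤ t := Nat.sInf_le ⟨h1, by omega⟩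
    omega
  have hj1 : fr w j ≠ j + 1 := by
    intro hEq
    have h5 := ht_step_up w j hj hu
    have h2 := hmem.2
    rw [hEq] at h2; omega
  have hgt : j + 1 < fr w j := by
    have := hmem.1; omega
  refine ⟨hgt, hle, ?_, hint⟩
  have h1 : ht w j < ht w (fr w j - 1) := hint _ (by omega) (by omega)
  have h2 := (ht_step_abs w (fr w j - 1)).1
  have h3 : fr w j - 1 + 1 = fr w j := by omega
  rw [h3] at h2
  have h6 := hmem.2
  omega

lemma excLen_eq (w : List Bool) (j : ℕ) (hw : IsDyckWord w) (hj : j < w.length)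
    (hu : w.getD j false = true) : excLen w j = fr w j - j := by
  obtain ⟨hgt, hle, heq, hint⟩ := fr_spec w j hw hj hu
  rw [excLen]
  apply sInf_eq_of
  · refine ⟨by omega, ?_⟩
    rw [isDyckWord_slice w j (fr w j - j)]
    constructor
    · rw [show j + (fr w j - j) = fr w j by omega]; exact heq
    · intro t htt
      rcases Nat.eq_zero_or_pos t with h0 | h0
      · simp [h0]
      rcases Nat.lt_or_ge (j + t) (fr w j) with h1 | h1
      · exact le_of_lt (hint _ (by omega) h1)
      · have h2 : j + t = fr w j := by omega
        rw [h2, heq]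
  · rintro L ⟨hL, hdy⟩
    by_contra hc
    push_neg at hc
    have hLlen : j + L ≤ w.length := by omega
    rw [isDyckWord_slice w j L] at hdy
    have h2 := hdy.1
    have h5 := hint (j + L) (by omega) (by omega)
    omega

noncomputable def Nf (w : List Bool) (i : ℕ) : ℕ := cntT w (fr w (pos w i))

lemma distFn_eq (w : List Bool) (i : ℕ) (hw : IsDyckWord w) (h : i < w.count true) :
    distFn w i = Nf w i - i ∧ i < Nf w i := by
  have hc := pos_char w i h
  have hl := pos_lt_length w i h
  obtain ⟨hgt, hle, heq, hint⟩ := fr_spec w (pos w i) hw hl hc.1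
  have e1 : distFn w i = excLen w (pos w i) / 2 := rfl
  rw [excLen_eq w _ hw hl hc.1] at e1
  have h1 := ht_cnt w (fr w (pos w i)) hle
  have h2 := ht_cnt w (pos w i) (by omega)
  have hNi : i < Nf w i := by
    have h3 := cntT_succ w (pos w i) hl
    rw [hc.1, if_pos rfl, hc.2] at h3
    have hm := cntT_mono w (show pos w i + 1 ≤ fr w (pos w i) by omega)
    simp only [Nf]
    omega
  refine ⟨?_, hNi⟩
  simp only [Nf] at *
  rw [e1, hc.2] at *
  omega

lemma countT_eq (w : List Bool) : w.count true = cntT w w.length := by simp [cntT]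

lemma cntT_le_count (w : List Bool) (m : ℕ) : cntT w m ≤ w.count true := by
  rcases Nat.le_total m w.length with h | h
  · rw [countT_eq]; exact cntT_mono w h
  · rw [countT_eq, (cnt_stop w m h).1]

lemma nest (w : List Bool) (hw : IsDyckWord w) (i k : ℕ) (hik : i ≤ k)
    (hk : k < w.count true) (hkN : k < Nf w i) : Nf w k ≤ Nf w i := by
  have hi : i < w.count true := lt_of_le_of_lt hik (lt_of_lt_of_le hk (le_refl _))
  rcases eq_or_lt_of_le hik with rfl | hik'
  · exact le_refl _
  have hci := pos_char w i hi
  have hck := pos_char w k hk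
  have hli := pos_lt_length w i hi
  have hlk := pos_lt_length w k hk
  obtain ⟨hgt, hle, heq, hint⟩ := fr_spec w (pos w i) hw hli hci.1
  have hpik : pos w i < pos w k := pos_strictMono w i k hik' hk
  have hpk_lt : pos w k < fr w (pos w i) := by
    rw [pos_lt_iff w k _ hk]
    exact hkN
  have hhk : ht w (pos w i) < ht w (pos w k) := hint _ hpik hpk_lt
  have hfr_le : fr w (pos w k) ≤ fr w (pos w i) :=
    Nat.sInf_le ⟨hpk_lt, by omega⟩
  simp only [Nf]
  exact cntT_mono w hfr_le

lemma fr_inj_aux (w : List Bool) (hw : IsDyckWord w) (i k : ℕ) (hi : i < w.count true)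
    (hk : k < w.count true) (hfr : fr w (pos w i) = fr w (pos w k)) (hik : i < k) :
    False := by
  have hci := pos_char w i hi
  have hck := pos_char w k hk
  have hli := pos_lt_length w i hi
  have hlk := pos_lt_length w k hk
  obtain ⟨hgt, hle, heq, hint⟩ := fr_spec w (pos w i) hw hli hci.1
  obtain ⟨hgt2, hle2, heq2, hint2⟩ := fr_spec w (pos w k) hw hlk hck.1
  have hpik : pos w i < pos w k := pos_strictMono w i k hik hk
  have h1 : pos w k < fr w (pos w i) := by rw [hfr]; omega
  have h2 := hint _ hpik h1
  rw [hfr] at heq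
  omega

lemma fr_inj (w : List Bool) (hw : IsDyckWord w) (i k : ℕ) (hi : i < w.count true)
    (hk : k < w.count true) (hfr : fr w (pos w i) = fr w (pos w k)) : i = k := by
  rcases Nat.lt_trichotomy i k with h | h | h
  · exact absurd (fr_inj_aux w hw i k hi hk hfr h) not_false
  · exact h
  · exact absurd (fr_inj_aux w hw k i hk hi hfr.symm h) not_false

lemma down_match (w : List Bool) (hw : IsDyckWord w) (q : ℕ) (hq : q < w.length)
    (hd : w.getD q false = false) :
    ∃ k, k < w.count true ∧ pos w k ≤ q ∧ fr w (pos w k) = q + 1 ∧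
      ht w (pos w k) = ht w (q+1) := by
  obtain ⟨hz, hnn⟩ := (isDyckWord_iff_ht w).1 hw
  set h : ℤ := ht w (q+1) with hh
  have hstep : ht w (q+1) = ht w q - 1 := ht_step_down w q hq hd
  classical
  set Pr : ℕ → Prop := fun t => ht w t ≤ h with hPr
  have hP0 : Pr 0 := by simp only [hPr, ht_zero]; exact hnn (q+1)
  set v : ℕ := Nat.findGreatest Pr q with hv
  have hPv : Pr v := Nat.findGreatest_spec (Nat.zero_le q) hP0
  have hvq : v ≤ q := Nat.findGreatest_le q
  have hnotq : ¬ Pr q := by simp only [hPr]; omega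
  have hvltq : v < q := lt_of_le_of_ne hvq (fun hEq => hnotq (hEq ▸ hPv))
  have hgr : ∀ t, v < t → t ≤ q → ¬ Pr t := fun t h1 h2 =>
    Nat.findGreatest_is_greatest (hv ▸ h1) h2
  have hv1 : ¬ Pr (v+1) := hgr (v+1) (by omega) (by omega)
  have hup : ht w v < ht w (v+1) := by
    simp only [hPr] at hPv hv1; omega
  obtain ⟨hvlen, hvu⟩ := ht_up w v hup
  have habs := ht_step_abs w v
  have hhv : ht w v = h := by simp only [hPr] at hPv hv1; omega
  set k := cntT w v with hk
  have hklt : k < w.count true := by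
    have h3 := cntT_succ w v hvlen
    rw [hvu, if_pos rfl] at h3
    have := cntT_le_count w (v+1)
    omega
  have hposk : pos w k = v := pos_unique w k v hklt hvu rfl
  have hfrv : fr w v = q + 1 := by
    apply sInf_eq_of
    · exact ⟨by omega, by rw [hhv]⟩
    · rintro x ⟨hx1, hx2⟩
      by_contra hc
      exact hgr x hx1 (by omega) (by simp only [hPr]; omega)
  exact ⟨k, hklt, by omega, by rw [hposk, hfrv], by rw [hposk, hhv]⟩

lemma cntF_card (w : List Bool) (p : ℕ) (hp : p ≤ w.length) :
    cntF w p = ((Finset.range p).filter (fun q => w.getD q false = false)).card := by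
  induction p with
  | zero => simp [cntF]
  | succ m ih =>
    rw [Finset.range_add_one, Finset.filter_insert]
    have hm : m < w.length := by omega
    rw [cntF_succ w m hm, ih (by omega)]
    by_cases hq : w.getD m false = true
    · rw [if_pos hq, if_neg (by rw [hq]; simp)]; omega
    · simp only [Bool.not_eq_true] at hq
      rw [if_neg (by rw [hq]; simp), if_pos hq, Finset.card_insert_of_notMem (by simp)]

lemma pos_eq_card (w : List Bool) (hw : IsDyckWord w) (i : ℕ) (hi : i < w.count true) :
    pos w i = i + ((Finset.range i).filter (fun k => Nf w k ≤ i)).card := by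
  have hci := pos_char w i hi
  have hli := pos_lt_length w i hi
  have hsum := cnt_len w (pos w i)
  rw [Nat.min_eq_left (by omega)] at hsum
  rw [cntF_card w (pos w i) (by omega)] at hsum
  have hcard : ((Finset.range i).filter (fun k => Nf w k ≤ i)).card
      = ((Finset.range (pos w i)).filter (fun q => w.getD q false = false)).card := by
    apply Finset.card_bij (fun k _ => fr w (pos w k) - 1)
    · intro k hk
      simp only [Finset.mem_filter, Finset.mem_range] at hk ⊢
      obtain ⟨hki, hNk⟩ := hk
      have hkn : k < w.count true := by omega
      have hck := pos_char w k hkn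
      have hlk := pos_lt_length w k hkn
      obtain ⟨hgt, hle, heq, hint⟩ := fr_spec w (pos w k) hw hlk hck.1
      have hfrle : fr w (pos w k) ≤ pos w i := by
        by_contra hc
        have h1 : pos w i + 1 ≤ fr w (pos w k) := by omega
        have h2 := cntT_mono w h1
        have h3 := cntT_succ w (pos w i) hli
        rw [hci.1, if_pos rfl, hci.2] at h3
        have h4 : cntT w (fr w (pos w k)) = Nf w k := rfl
        omega
      refine ⟨by omega, ?_⟩
      have h1 : ht w (pos w k) < ht w (fr w (pos w k) - 1) := hint _ (by omega) (by omega)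
      have h2 : ht w (fr w (pos w k) - 1 + 1) < ht w (fr w (pos w k) - 1) := by
        rw [show fr w (pos w k) - 1 + 1 = fr w (pos w k) by omega]; omega
      exact (ht_down w _ h2).2
    · intro k1 h1 k2 h2 hEq
      simp only [Finset.mem_filter, Finset.mem_range] at h1 h2
      have hk1 : k1 < w.count true := by omega
      have hk2 : k2 < w.count true := by omega
      have hg1 := (fr_spec w (pos w k1) hw (pos_lt_length w k1 hk1) (pos_char w k1 hk1).1).1
      have hg2 := (fr_spec w (pos w k2) hw (pos_lt_length w k2 hk2) (pos_char w k2 hk2).1).1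
      exact fr_inj w hw k1 k2 hk1 hk2 (by omega)
    · intro q hq
      simp only [Finset.mem_filter, Finset.mem_range] at hq
      obtain ⟨hqp, hqd⟩ := hq
      have hqlen : q < w.length := by omega
      obtain ⟨k, hkn, hkq, hfrk, _⟩ := down_match w hw q hqlen hqd
      have hki : k < i := by
        have h5 := (pos_lt_iff w k (pos w i) hkn).1 (by omega)
        rw [hci.2] at h5
        exact h5
      have hNk : Nf w k ≤ i := by
        have h6 := cntT_mono w (show q + 1 ≤ pos w i by omega)
        simp only [Nf]
        rw [hfrk]
        omega
      exact ⟨k, by simp only [Finset.mem_filter, Finset.mem_range]; exact ⟨hki, hNk⟩, by omega⟩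
  omega

lemma two_mul_count_true (w : List Bool) (hw : IsDyckWord w) :
    2 * w.count true = w.length := by
  have h1 := cnt_len w w.length
  rw [Nat.min_self] at h1
  have h2 : w.count false = cntF w w.length := by simp [cntF]
  have h3 := countT_eq w
  have h4 := hw.1
  omega

lemma distFn_inj (P Q : List Bool) (hP : IsDyckWord P) (hQ : IsDyckWord Q)
    (hlen : P.length = Q.length)
    (hD : ∀ i < P.count true, distFn P i = distFn Q i) : P = Q := by
  have hn : Q.count true = P.count true := by
    have := two_mul_count_true P hP
    have := two_mul_count_true Q hQ
    omega
  have hNf : ∀ i < P.count true, Nf P i = Nf Q i := by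
    intro i hi
    obtain ⟨e1, l1⟩ := distFn_eq P i hP hi
    obtain ⟨e2, l2⟩ := distFn_eq Q i hQ (by omega)
    have := hD i hi
    omega
  have hpos : ∀ i < P.count true, pos P i = pos Q i := by
    intro i hi
    rw [pos_eq_card P hP i hi, pos_eq_card Q hQ i (by omega)]
    congr 2
    apply Finset.filter_congr
    intro k hk
    simp only [Finset.mem_range] at hk
    rw [hNf k (by omega)]
  have hgetD : ∀ p, P.getD p false = Q.getD p false := by
    have key : ∀ (X Y : List Bool), IsDyckWord X → IsDyckWord Y →
        X.length = Y.length → X.count true = Y.count true →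
        (∀ i < X.count true, pos X i = pos Y i) →
        ∀ p, X.getD p false = true → Y.getD p false = true := by
      intro X Y hX hY hlen2 hcnt2 hpos2 p hXp
      have hplen : p < X.length := by
        by_contra hc
        rw [List.getD_eq_default _ _ (by omega)] at hXp
        exact absurd hXp (by simp)
      have hk : cntT X p < X.count true := by
        have h3 := cntT_succ X p hplen
        rw [hXp, if_pos rfl] at h3
        have := cntT_le_count X (p+1)
        omega
      have h4 : pos X (cntT X p) = p := pos_unique X _ p hk hXp rfl
      have h5 : pos Y (cntT X p) = p := by rw [← hpos2 _ hk]; exact h4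
      have := (pos_char Y (cntT X p) (by omega)).1
      rw [h5] at this
      exact this
    intro p
    cases h1 : P.getD p false with
    | true => exact (key P Q hP hQ hlen hn.symm hpos p h1).symm
    | false =>
      cases h2 : Q.getD p false with
      | true =>
        have := key Q P hQ hP hlen.symm hn (by
          intro i hi; exact (hpos i (by omega)).symm) p h2
        rw [h1] at this; exact absurd this (by simp)
      | false => rfl
  apply List.ext_getElem hlen
  intro p h1 h2
  have := hgetD p
  rwa [List.getD_eq_getElem P false h1, List.getD_eq_getElem Q false h2] at this

section Rot
variable (A S B : List Bool)

lemma rot_lenP : (A ++ false :: (S ++ B)).length = A.length + 1 + S.length + B.length := by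
  simp; omega

lemma rot_lenQ : (A ++ S ++ false :: B).length = A.length + 1 + S.length + B.length := by
  simp; omega

lemma rot_takeP1 (m : ℕ) (hm : m ≤ A.length) :
    (A ++ false :: (S ++ B)).take m = A.take m := List.take_append_of_le_length hm

lemma rot_takeQ1 (m : ℕ) (hm : m ≤ A.length) :
    (A ++ S ++ false :: B).take m = A.take m := by
  rw [List.append_assoc]
  exact List.take_append_of_le_length hm

lemma rot_takeP2 (t : ℕ) (ht : t ≤ S.length) :
    (A ++ false :: (S ++ B)).take (A.length + 1 + t) = A ++ false :: S.take t := by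
  rw [show A.length + 1 + t = A.length + (1 + t) by omega, List.take_length_add_append,
    show (1 + t) = t + 1 by omega]
  simp only [List.take_succ_cons]
  rw [List.take_append_of_le_length ht]

lemma rot_takeQ2 (t : ℕ) (ht : t ≤ S.length) :
    (A ++ S ++ false :: B).take (A.length + t) = A ++ S.take t := by
  rw [List.append_assoc, List.take_length_add_append, List.take_append_of_le_length ht]

lemma rot_takeP3 (r : ℕ) :
    (A ++ false :: (S ++ B)).take (A.length + S.length + 1 + r)
      = (A ++ false :: S) ++ B.take r := by
  have h1 : A ++ false :: (S ++ B) = (A ++ false :: S) ++ B := by simp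
  have h2 : (A ++ false :: S).length = A.length + S.length + 1 := by simp; omega
  rw [h1, show A.length + S.length + 1 + r = (A ++ false :: S).length + r by omega,
    List.take_length_add_append]

lemma rot_takeQ3 (r : ℕ) :
    (A ++ S ++ false :: B).take (A.length + S.length + 1 + r)
      = (A ++ S ++ [false]) ++ B.take r := by
  have h1 : A ++ S ++ false :: B = (A ++ S ++ [false]) ++ B := by simp
  have h2 : (A ++ S ++ [false]).length = A.length + S.length + 1 := by simp; omega
  rw [h1, show A.length + S.length + 1 + r = (A ++ S ++ [false]).length + r by omega,
    List.take_length_add_append]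

lemma rot_cntP1 (m : ℕ) (hm : m ≤ A.length) :
    cntT (A ++ false :: (S ++ B)) m = cntT A m ∧ cntF (A ++ false :: (S ++ B)) m = cntF A m := by
  constructor <;> simp [cntT, cntF, rot_takeP1 A S B m hm]

lemma rot_cntQ1 (m : ℕ) (hm : m ≤ A.length) :
    cntT (A ++ S ++ false :: B) m = cntT A m ∧ cntF (A ++ S ++ false :: B) m = cntF A m := by
  constructor <;> simp only [cntT, cntF, rot_takeQ1 A S B m hm]

lemma rot_htPQ1 (m : ℕ) (hm : m ≤ A.length) :
    ht (A ++ S ++ false :: B) m = ht (A ++ false :: (S ++ B)) m := by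
  simp only [ht, (rot_cntP1 A S B m hm).1, (rot_cntP1 A S B m hm).2,
    (rot_cntQ1 A S B m hm).1, (rot_cntQ1 A S B m hm).2]

lemma rot_cntP2 (t : ℕ) (ht : t ≤ S.length) :
    cntT (A ++ false :: (S ++ B)) (A.length + 1 + t) = A.count true + cntT S t := by
  rw [cntT, rot_takeP2 A S B t ht]
  simp [cntT, List.count_append, List.count_cons]

lemma rot_cntQ2 (t : ℕ) (ht : t ≤ S.length) :
    cntT (A ++ S ++ false :: B) (A.length + t) = A.count true + cntT S t := by
  rw [cntT, rot_takeQ2 A S B t ht]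
  simp [cntT, List.count_append]

lemma rot_cntP3 (r : ℕ) :
    cntT (A ++ false :: (S ++ B)) (A.length + S.length + 1 + r)
      = A.count true + S.count true + cntT B r ∧
    cntF (A ++ false :: (S ++ B)) (A.length + S.length + 1 + r)
      = A.count false + S.count false + 1 + cntF B r := by
  rw [cntT, cntF, rot_takeP3 A S B r]
  constructor <;> simp [cntT, cntF, List.count_append, List.count_cons] <;> omega

lemma rot_cntQ3 (r : ℕ) :
    cntT (A ++ S ++ false :: B) (A.length + S.length + 1 + r)
      = A.count true + S.count true + cntT B r ∧
    cntF (A ++ S ++ false :: B) (A.length + S.length + 1 + r)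
      = A.count false + S.count false + 1 + cntF B r := by
  rw [cntT, cntF, rot_takeQ3 A S B r]
  constructor <;> simp [cntT, cntF, List.count_append, List.count_cons] <;> omega

lemma rot_eq3 (m : ℕ) (hm : A.length + S.length + 1 ≤ m) :
    cntT (A ++ S ++ false :: B) m = cntT (A ++ false :: (S ++ B)) m ∧
    ht (A ++ S ++ false :: B) m = ht (A ++ false :: (S ++ B)) m := by
  obtain ⟨r, hr⟩ : ∃ r, m = A.length + S.length + 1 + r := ⟨m - (A.length + S.length + 1), by omega⟩
  subst hr
  have h1 := rot_cntP3 A S B r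
  have h2 := rot_cntQ3 A S B r
  constructor
  · rw [h1.1, h2.1]
  · simp only [ht, h1.1, h1.2, h2.1, h2.2]

lemma rot_getDP1 (m : ℕ) (hm : m < A.length) :
    (A ++ false :: (S ++ B)).getD m false = A.getD m false := List.getD_append _ _ _ _ hm

lemma rot_getDQ1 (m : ℕ) (hm : m < A.length) :
    (A ++ S ++ false :: B).getD m false = A.getD m false := by
  rw [List.append_assoc]
  exact List.getD_append _ _ _ _ hm

lemma rot_getDP2 (t : ℕ) (ht : t < S.length) :
    (A ++ false :: (S ++ B)).getD (A.length + 1 + t) false = S.getD t false := by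
  rw [show A.length + 1 + t = A.length + (1 + t) by omega,
    List.getD_append_right _ _ _ _ (by omega)]
  simp only [Nat.add_sub_cancel_left, show 1 + t = t + 1 by omega, List.getD_cons_succ]
  exact List.getD_append _ _ _ _ ht

lemma rot_getDQ2 (t : ℕ) (ht : t < S.length) :
    (A ++ S ++ false :: B).getD (A.length + t) false = S.getD t false := by
  rw [List.append_assoc, List.getD_append_right _ _ _ _ (by omega)]
  simp only [Nat.add_sub_cancel_left]
  exact List.getD_append _ _ _ _ ht

lemma rot_getDP3 (r : ℕ) (hr : r < B.length) :
    (A ++ false :: (S ++ B)).getD (A.length + S.length + 1 + r) false = B.getD r false := by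
  have h1 : A ++ false :: (S ++ B) = (A ++ false :: S) ++ B := by simp
  have h2 : (A ++ false :: S).length = A.length + S.length + 1 := by simp; omega
  rw [h1, List.getD_append_right _ _ _ _ (by omega), h2]
  congr 1; omega

lemma rot_getDQ3 (r : ℕ) (hr : r < B.length) :
    (A ++ S ++ false :: B).getD (A.length + S.length + 1 + r) false = B.getD r false := by
  have h1 : A ++ S ++ false :: B = (A ++ S ++ [false]) ++ B := by simp
  have h2 : (A ++ S ++ [false]).length = A.length + S.length + 1 := by simp; omega
  rw [h1, List.getD_append_right _ _ _ _ (by omega), h2]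
  congr 1; omega

end Rot

section Rot2
variable (A S B : List Bool)

lemma rot_cPa : cntT (A ++ false :: (S ++ B)) A.length = A.count true := by
  rw [(rot_cntP1 A S B A.length le_rfl).1, ← countT_eq]

lemma rot_cQa : cntT (A ++ S ++ false :: B) A.length = A.count true := by
  rw [(rot_cntQ1 A S B A.length le_rfl).1, ← countT_eq]

lemma rot_htP2 (t : ℕ) (htl : t ≤ S.length) :
    ht (A ++ false :: (S ++ B)) (A.length + 1 + t)
      = ht (A ++ false :: (S ++ B)) A.length - 1 + ht S t := by
  have e1 := ht_cnt (A ++ false :: (S ++ B)) (A.length + 1 + t) (by rw [rot_lenP]; omega)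
  have e2 := ht_cnt (A ++ false :: (S ++ B)) A.length (by rw [rot_lenP]; omega)
  have e3 := ht_cnt S t htl
  rw [rot_cntP2 A S B t htl] at e1
  rw [rot_cPa] at e2
  omega

lemma rot_htQ2 (t : ℕ) (htl : t ≤ S.length) :
    ht (A ++ S ++ false :: B) (A.length + t)
      = ht (A ++ false :: (S ++ B)) A.length + ht S t := by
  have e1 := ht_cnt (A ++ S ++ false :: B) (A.length + t) (by rw [rot_lenQ]; omega)
  have e2 := ht_cnt (A ++ false :: (S ++ B)) A.length (by rw [rot_lenP]; omega)
  have e3 := ht_cnt S t htl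
  rw [rot_cntQ2 A S B t htl] at e1
  rw [rot_cPa] at e2
  omega

lemma rot_hSpos (hS : IsDyckWord S)
    (hprim : ∀ k, 0 < k → k < S.length → ¬ IsDyckWord (S.take k)) :
    ∀ t, 0 < t → t < S.length → 0 < ht S t := by
  intro t h1 h2
  have hnn := ((isDyckWord_iff_ht S).1 hS).2 t
  rcases lt_or_eq_of_le hnn with h | h
  · exact h
  exfalso
  apply hprim t h1 h2
  have e : S.take t = (S.drop 0).take t := by rw [List.drop_zero]
  rw [e, isDyckWord_slice S 0 t]
  refine ⟨by rw [Nat.zero_add, ht_zero, ← h], fun t' _ => ?_⟩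
  rw [Nat.zero_add, ht_zero]
  exact ((isDyckWord_iff_ht S).1 hS).2 t'

lemma rot_count_true : (A ++ S ++ false :: B).count true
    = (A ++ false :: (S ++ B)).count true := by
  simp [List.count_append, List.count_cons]

lemma rot_dyckQ (hP : IsDyckWord (A ++ false :: (S ++ B))) (hS : IsDyckWord S) :
    IsDyckWord (A ++ S ++ false :: B) := by
  obtain ⟨hz, hnn⟩ := (isDyckWord_iff_ht (A ++ false :: (S ++ B))).1 hP
  obtain ⟨hzS, hnnS⟩ := (isDyckWord_iff_ht S).1 hS
  rw [rot_lenP] at hz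
  rw [isDyckWord_iff_ht, rot_lenQ]
  constructor
  · rw [(rot_eq3 A S B (A.length + 1 + S.length + B.length) (by omega)).2]; exact hz
  · intro m
    rcases Nat.le_total m A.length with hm | hm
    · rw [rot_htPQ1 A S B m hm]; exact hnn m
    rcases Nat.lt_or_ge m (A.length + S.length + 1) with hm2 | hm2
    · rw [show m = A.length + (m - A.length) by omega, rot_htQ2 A S B _ (by omega)]
      have := hnn A.length
      have := hnnS (m - A.length)
      omega
    · rw [(rot_eq3 A S B m (by omega)).2]; exact hnn m

end Rot2

section Rot3
variable (A S B : List Bool)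
local notation "P!" => A ++ false :: (S ++ B)
local notation "Q!" => A ++ S ++ false :: B

lemma fr_eq_of (w : List Bool) (j z : ℕ) (h1 : j < z) (h2 : ht w z ≤ ht w j)
    (h3 : ∀ x, j < x → ht w x ≤ ht w j → z ≤ x) : fr w j = z := by
  have h4 : sInf {t | j < t ∧ ht w t ≤ ht w j} = z := by
    apply sInf_eq_of (s := {t | j < t ∧ ht w t ≤ ht w j}) ⟨h1, h2⟩
    rintro x ⟨hx1, hx2⟩
    exact h3 x hx1 hx2
  exact h4

lemma fr_le_of (w : List Bool) (j x : ℕ) (h1 : j < x) (h2 : ht w x ≤ ht w j) :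
    fr w j ≤ x := Nat.sInf_le ⟨h1, h2⟩

lemma rotation_effect (hS : IsDyckWord S) (hSne : S ≠ [])
    (hprim : ∀ k, 0 < k → k < S.length → ¬ IsDyckWord (S.take k))
    (hP : IsDyckWord (P!)) (k : ℕ) (hk : k < (P!).count true) :
    distFn (Q!) k = distFn (P!) k +
      (if fr (P!) (pos (P!) k) = A.length + 1 then S.count true else 0) := by
  have hQd := rot_dyckQ A S B hP hS
  have hcnt := rot_count_true A S B
  have hkQ : k < (Q!).count true := by rw [hcnt]; exact hk
  obtain ⟨hz, hnn⟩ := (isDyckWord_iff_ht (P!)).1 hP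
  obtain ⟨hzS, hnnS⟩ := (isDyckWord_iff_ht S).1 hS
  have hSpos := rot_hSpos S hS hprim
  have hl0 : 0 < S.length := List.length_pos_iff.2 hSne
  have hsT : 2 * S.count true = S.length := two_mul_count_true S hS
  have hdP := distFn_eq (P!) k hP hk
  have hdQ := distFn_eq (Q!) k hQd hkQ
  have hcA : cntT (P!) A.length = A.count true := rot_cPa A S B
  have hsplit : (P!).count true = A.count true + S.count true + B.count true := by
    simp [List.count_append, List.count_cons]; omega
  rcases Nat.lt_or_ge k (A.count true) with hreg | hreg
  · -- k is an up step in A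
    have hcP := pos_char (P!) k hk
    have hpa : pos (P!) k < A.length := by
      rw [pos_lt_iff (P!) k A.length hk, hcA]; exact hreg
    have hposQ : pos (Q!) k = pos (P!) k := by
      apply pos_unique (Q!) k _ hkQ
      · rw [rot_getDQ1 A S B _ hpa, ← rot_getDP1 A S B _ hpa]; exact hcP.1
      · rw [(rot_cntQ1 A S B _ (le_of_lt hpa)).1, ← (rot_cntP1 A S B _ (le_of_lt hpa)).1]
        exact hcP.2
    have hplen : pos (P!) k < (P!).length := pos_lt_length (P!) k hk
    obtain ⟨hfgt, hfle, hfeq, hfint⟩ := fr_spec (P!) (pos (P!) k) hP hplen hcP.1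
    set p := pos (P!) k with hp
    set f := fr (P!) p with hf
    rw [rot_lenP] at hfle
    have hh1 : ht (P!) (A.length + 1) = ht (P!) A.length - 1 := by
      have e := rot_htP2 A S B 0 (by omega)
      rw [ht_zero] at e
      rw [Nat.add_zero] at e
      omega
    rcases Nat.lt_or_ge f (A.length + 1) with hA1 | hA1
    · -- excursion ends inside A
      have hfa : f ≤ A.length := by omega
      have hfrQ : fr (Q!) p = f := by
        apply fr_eq_of
        · omega
        · rw [rot_htPQ1 A S B f hfa, rot_htPQ1 A S B p (by omega)]; omega
        · intro x hx1 hx2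
          by_contra hc
          push_neg at hc
          rw [rot_htPQ1 A S B x (by omega), rot_htPQ1 A S B p (by omega)] at hx2
          have := hfint x hx1 (by omega)
          omega
      have hNf : Nf (Q!) k = Nf (P!) k := by
        simp only [Nf]
        rw [hposQ, hfrQ, ← hp, ← hf,
          (rot_cntQ1 A S B f hfa).1, (rot_cntP1 A S B f hfa).1]
      rw [if_neg (by omega)]
      omega
    rcases Nat.eq_or_lt_of_le hA1 with hA2 | hA3
    · -- the down step just after A closes the excursion : f = A.length + 1
      have hg : ht (P!) (A.length + 1) = ht (P!) p := by rw [hA2]; exact hfeq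
      have hfrQ : fr (Q!) p = A.length + S.length + 1 := by
        apply fr_eq_of
        · omega
        · rw [(rot_eq3 A S B (A.length + S.length + 1) (by omega)).2,
            rot_htPQ1 A S B p (by omega)]
          have e : A.length + S.length + 1 = A.length + 1 + S.length := by omega
          rw [e, rot_htP2 A S B S.length le_rfl, hzS]
          omega
        · intro x hx1 hx2
          by_contra hc
          push_neg at hc
          rw [rot_htPQ1 A S B p (by omega)] at hx2
          rcases Nat.le_total x A.length with hxa | hxa
          · rw [rot_htPQ1 A S B x hxa] at hx2
            have := hfint x hx1 (by omega)
            omega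
          · have hxt := rot_htQ2 A S B (x - A.length) (by omega)
            rw [show A.length + (x - A.length) = x by omega] at hxt
            have := hnnS (x - A.length)
            omega
      have hNfQ : Nf (Q!) k = A.count true + S.count true := by
        simp only [Nf]
        rw [hposQ, hfrQ]
        have e := (rot_cntQ3 A S B 0).1
        rw [Nat.add_zero] at e
        rw [e]
        simp [cntT]
      have hNfP : Nf (P!) k = A.count true := by
        simp only [Nf]
        rw [← hp, ← hf, ← hA2]
        have e := rot_cntP2 A S B 0 (by omega)
        rw [Nat.add_zero] at e
        rw [e]
        simp [cntT]
      rw [if_pos (by omega)]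
      omega
    · -- the excursion of u_k strictly contains the rotation window
      have hgint := hfint (A.length + 1) (by omega) hA3
      have hfbig : A.length + S.length + 1 < f := by
        by_contra hc
        push_neg at hc
        have h2 := rot_htP2 A S B (f - (A.length + 1)) (by omega)
        rw [show A.length + 1 + (f - (A.length + 1)) = f by omega] at h2
        have h3 := hnnS (f - (A.length + 1))
        omega
      have hfrQ : fr (Q!) p = f := by
        apply fr_eq_of
        · omega
        · rw [(rot_eq3 A S B f (by omega)).2, rot_htPQ1 A S B p (by omega)]; omega
        · intro x hx1 hx2
          by_contra hc
          push_neg at hc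
          rw [rot_htPQ1 A S B p (by omega)] at hx2
          rcases Nat.le_total x A.length with hxa | hxa
          · rw [rot_htPQ1 A S B x hxa] at hx2
            have := hfint x hx1 (by omega); omega
          rcases Nat.lt_or_ge x (A.length + S.length + 1) with hxb | hxb
          · have hxt := rot_htQ2 A S B (x - A.length) (by omega)
            rw [show A.length + (x - A.length) = x by omega] at hxt
            have := hnnS (x - A.length)
            omega
          · rw [(rot_eq3 A S B x (by omega)).2] at hx2
            have := hfint x hx1 (by omega); omega
      have hNf : Nf (Q!) k = Nf (P!) k := by
        simp only [Nf]
        rw [hposQ, hfrQ, ← hp, ← hf, (rot_eq3 A S B f (by omega)).1]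
      rw [if_neg (by omega)]
      omega
  rcases Nat.lt_or_ge k (A.count true + S.count true) with hreg2 | hreg2
  · -- k is an up step inside S
    have hkS : k - A.count true < S.count true := by omega
    have hcS := pos_char S (k - A.count true) hkS
    have hqlen := pos_lt_length S (k - A.count true) hkS
    set q := pos S (k - A.count true) with hq
    obtain ⟨hfgtS, hfleS, hfeqS, hfintS⟩ := fr_spec S q hS hqlen hcS.1
    set fS := fr S q with hfS
    have hposP : pos (P!) k = A.length + 1 + q := by
      apply pos_unique (P!) k _ hk
      · rw [rot_getDP2 A S B q hqlen]; exact hcS.1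
      · rw [rot_cntP2 A S B q (by omega), hcS.2]; omega
    have hposQ : pos (Q!) k = A.length + q := by
      apply pos_unique (Q!) k _ hkQ
      · rw [rot_getDQ2 A S B q hqlen]; exact hcS.1
      · rw [rot_cntQ2 A S B q (by omega), hcS.2]; omega
    have hfrP : fr (P!) (A.length + 1 + q) = A.length + 1 + fS := by
      apply fr_eq_of
      · omega
      · rw [rot_htP2 A S B fS (by omega), rot_htP2 A S B q (by omega)]; omega
      · intro x hx1 hx2
        rcases Nat.lt_or_ge x (A.length + 1 + S.length + 1) with hxb | hxb
        · have hxt := rot_htP2 A S B (x - (A.length + 1)) (by omega)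
          rw [show A.length + 1 + (x - (A.length + 1)) = x by omega] at hxt
          rw [rot_htP2 A S B q (by omega)] at hx2
          have hle2 : fS ≤ x - (A.length + 1) :=
            fr_le_of S q _ (by omega) (by omega)
          omega
        · omega
    have hfrQ : fr (Q!) (A.length + q) = A.length + fS := by
      apply fr_eq_of
      · omega
      · rw [rot_htQ2 A S B fS (by omega), rot_htQ2 A S B q (by omega)]; omega
      · intro x hx1 hx2
        rcases Nat.lt_or_ge x (A.length + S.length + 1) with hxb | hxb
        · have hxt := rot_htQ2 A S B (x - A.length) (by omega)
          rw [show A.length + (x - A.length) = x by omega] at hxt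
          rw [rot_htQ2 A S B q (by omega)] at hx2
          have hle2 : fS ≤ x - A.length :=
            fr_le_of S q _ (by omega) (by omega)
          omega
        · omega
    have hNf : Nf (Q!) k = Nf (P!) k := by
      simp only [Nf]
      rw [hposQ, hposP, hfrP, hfrQ, rot_cntP2 A S B fS (by omega),
        rot_cntQ2 A S B fS (by omega)]
    rw [if_neg (by rw [hposP, hfrP]; omega)]
    omega
  · -- k is an up step inside B
    have hkB : k - A.count true - S.count true < B.count true := by omega
    have hcB := pos_char B (k - A.count true - S.count true) hkB
    have hrlen := pos_lt_length B (k - A.count true - S.count true) hkB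
    set r := pos B (k - A.count true - S.count true) with hr
    have hposP : pos (P!) k = A.length + S.length + 1 + r := by
      apply pos_unique (P!) k _ hk
      · rw [rot_getDP3 A S B r hrlen]; exact hcB.1
      · rw [(rot_cntP3 A S B r).1, hcB.2]; omega
    have hposQ : pos (Q!) k = A.length + S.length + 1 + r := by
      apply pos_unique (Q!) k _ hkQ
      · rw [rot_getDQ3 A S B r hrlen]; exact hcB.1
      · rw [(rot_cntQ3 A S B r).1, hcB.2]; omega
    have hplen2 : A.length + S.length + 1 + r < (P!).length := by
      rw [rot_lenP]; omega
    have hup2 : (P!).getD (A.length + S.length + 1 + r) false = true := by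
      rw [rot_getDP3 A S B r hrlen]; exact hcB.1
    obtain ⟨hfgt, hfle, hfeq, hfint⟩ := fr_spec (P!) (A.length + S.length + 1 + r) hP hplen2 hup2
    have hfrQ : fr (Q!) (A.length + S.length + 1 + r)
        = fr (P!) (A.length + S.length + 1 + r) := by
      apply fr_eq_of
      · omega
      · rw [(rot_eq3 A S B _ (by omega)).2, (rot_eq3 A S B (A.length + S.length + 1 + r)
          (by omega)).2]
        omega
      · intro x hx1 hx2
        by_contra hc
        push_neg at hc
        rw [(rot_eq3 A S B x (by omega)).2, (rot_eq3 A S B (A.length + S.length + 1 + r)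
          (by omega)).2] at hx2
        have := hfint x hx1 (by omega); omega
    have hNf : Nf (Q!) k = Nf (P!) k := by
      simp only [Nf]
      rw [hposQ, hposP, hfrQ, (rot_eq3 A S B (fr (P!) (A.length + S.length + 1 + r))
        (by omega)).1]
    rw [if_neg (by rw [hposP]; omega)]
    omega

end Rot3

lemma backward_step (P Q : List Bool) (hP : IsDyckWord P) (hQ : IsDyckWord Q)
    (hlen : P.length = Q.length)
    (hle : ∀ i < P.count true, distFn P i ≤ distFn Q i) (hne : P ≠ Q) :
    ∃ P', Rotation P P' ∧ IsDyckWord P' ∧ P'.length = P.length ∧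
      P'.count true = P.count true ∧
      (∀ i < P'.count true, distFn P' i ≤ distFn Q i) ∧
      (Finset.range (P.count true)).sum (fun m => distFn Q m - distFn P' m) <
        (Finset.range (P.count true)).sum (fun m => distFn Q m - distFn P m) := by
  classical
  have hQcnt : Q.count true = P.count true := by
    have := two_mul_count_true P hP
    have := two_mul_count_true Q hQ
    omega
  have hex : ∃ m, m < P.count true ∧ distFn P m < distFn Q m := by
    by_contra hc
    push_neg at hc
    exact hne (distFn_inj P Q hP hQ hlen
      (fun m hm => le_antisymm (hle m hm) (hc m hm)))
  set i := Nat.find hex with hi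
  obtain ⟨hin, hstrict⟩ : i < P.count true ∧ distFn P i < distFn Q i := Nat.find_spec hex
  have hiQ : i < Q.count true := by omega
  have hdP := distFn_eq P i hP hin
  have hdQ := distFn_eq Q i hQ hiQ
  have hcP := pos_char P i hin
  have hplen : pos P i < P.length := pos_lt_length P i hin
  obtain ⟨hfgt, hfle, hfeq, hfint⟩ := fr_spec P (pos P i) hP hplen hcP.1
  set p := pos P i with hp
  set f := fr P p with hf
  have hNfi : Nf P i = cntT P f := by simp only [Nf]; rfl
  have hjlt : Nf P i < Nf Q i := by omega
  have hNQle : Nf Q i ≤ Q.count true := cntT_le_count Q _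
  have hflen : f < P.length := by
    rcases eq_or_lt_of_le hfle with hEq | hlt
    · exfalso
      have : cntT P f = P.count true := by rw [hEq, ← countT_eq]
      omega
    · exact hlt
  have hft : P.getD f false = true := by
    cases hgd : P.getD f false with
    | true => rfl
    | false =>
      exfalso
      obtain ⟨k, hkn, hkle, hkfr, hkht⟩ := down_match P hP f hflen hgd
      have hdown : ht P (f+1) = ht P f - 1 := ht_step_down P f hflen hgd
      have hpk : pos P k < p := by
        rcases Nat.lt_trichotomy (pos P k) p with h | h | h
        · exact h
        · exfalso; rw [h] at hkht; omega
        · exfalso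
          rcases Nat.lt_or_ge (pos P k) f with h2 | h2
          · have := hfint (pos P k) h h2; omega
          · have h3 : pos P k = f := by omega
            rw [h3] at hkht; omega
      have hki : k < i := by
        have h4 := (pos_lt_iff P k p hkn).1 hpk
        rw [hp, hcP.2] at h4
        exact h4
      have heqk : distFn P k = distFn Q k := by
        have h5 := Nat.find_min hex hki
        push_neg at h5
        exact le_antisymm (hle k (by omega)) (h5 (by omega))
      have hdPk := distFn_eq P k hP (by omega)
      have hdQk := distFn_eq Q k hQ (by omega)
      have hNfk_eq : Nf P k = Nf Q k := by omega
      have hNfkj : Nf P k = cntT P (f+1) := by simp only [Nf]; rw [hkfr]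
      have hcnteq : cntT P (f+1) = cntT P f := by
        rw [cntT_succ P f hflen, hgd]; simp
      have hnest : Nf Q i ≤ Nf Q k :=
        nest Q hQ k i (by omega) (by omega) (by omega)
      omega
  set j := Nf P i with hj
  have hjn : j < P.count true := by omega
  have hposj : pos P j = f := pos_unique P j f (by omega) hft hNfi.symm
  have hdPj := distFn_eq P j hP hjn
  have hdQj := distFn_eq Q j hQ (by omega)
  obtain ⟨hfgt2, hfle2, hfeq2, hfint2⟩ := fr_spec P f hP hflen hft
  set f2 := fr P f with hf2
  have hNfj : Nf P j = cntT P f2 := by simp only [Nf]; rw [hposj, ← hf2]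
  -- the rotation pieces
  set A := P.take (f-1) with hA
  set S := (P.drop f).take (f2 - f) with hS
  set B := P.drop f2 with hB
  have hAlen : A.length = f - 1 := by rw [hA, List.length_take]; omega
  have hSdyck : IsDyckWord S := by
    rw [hS, isDyckWord_slice P f (f2 - f)]
    constructor
    · rw [show f + (f2 - f) = f2 by omega]; exact hfeq2
    · intro t htt
      rcases Nat.eq_zero_or_pos t with h0 | h0
      · simp [h0]
      rcases Nat.lt_or_ge (f + t) f2 with h1 | h1
      · exact le_of_lt (hfint2 _ (by omega) h1)
      · rw [show f + t = f2 by omega, hfeq2]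
  have hSlen : S.length = f2 - f := by
    rw [hS, List.length_take, List.length_drop]
    omega
  have hSne : S ≠ [] := by
    have : S.length > 0 := by omega
    exact List.ne_nil_of_length_pos this
  have hprimS : ∀ t, 0 < t → t < S.length → ¬ IsDyckWord (S.take t) := by
    intro t h1 h2
    rw [hSlen] at h2
    have e : S.take t = (P.drop f).take t := by
      rw [hS, List.take_take, Nat.min_eq_left (by omega)]
    rw [e, isDyckWord_slice P f t]
    rintro ⟨hq1, _⟩
    have := hfint2 (f + t) (by omega) (by omega)
    omega
  have hfd : P.getD (f-1) false = false := by
    have h1 : ht P p < ht P (f-1) := hfint (f-1) (by omega) (by omega)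
    have h2 : ht P ((f-1)+1) < ht P (f-1) := by
      rw [show f - 1 + 1 = f by omega]; omega
    exact (ht_down P _ h2).2
  have htake : P.take f = A ++ [false] := by
    have h1 : f - 1 < P.length := by omega
    rw [show f = (f-1)+1 by omega, List.take_succ, List.getElem?_eq_getElem h1]
    have h2 : P[f-1]'h1 = false := by
      rw [← List.getD_eq_getElem P false h1]; exact hfd
    rw [hA]
    simp [h2]
  have hSB : S ++ B = P.drop f := by
    have h3 : P.drop f2 = (P.drop f).drop (f2 - f) := by
      rw [List.drop_drop]; congr 1; omega
    rw [hS, hB, h3, List.take_append_drop]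
  have hPdec : P = A ++ false :: (S ++ B) := by
    conv_lhs => rw [← List.take_append_drop f P]
    rw [htake, hSB]
    simp
  refine ⟨A ++ S ++ false :: B, ⟨A, S, B, hSdyck, hSne, hprimS, hPdec, rfl⟩, ?_, ?_, ?_, ?_, ?_⟩
  · exact rot_dyckQ A S B (hPdec ▸ hP) hSdyck
  · rw [rot_lenQ]; conv_rhs => rw [hPdec, rot_lenP]
  · rw [rot_count_true]; conv_rhs => rw [hPdec]
  · -- distFn bounds
    intro k hk
    have hk' : k < P.count true := by
      rw [rot_count_true] at hk; conv_rhs at hk => rw [← hPdec]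
      exact hk
    have he := rotation_effect A S B hSdyck hSne hprimS (hPdec ▸ hP) k
      (by rw [← hPdec]; exact hk')
    rw [← hPdec] at he
    rw [hAlen, show f - 1 + 1 = f by omega] at he
    have hsT : S.count true = distFn P j := by
      have e1 : S.count true = cntT P f2 - cntT P f := by
        rw [hS, cntT_slice, show f + (f2 - f) = f2 by omega]
      omega
    by_cases hcond : fr P (pos P k) = f
    · have hkeq : k = i := fr_inj P hP k i hk' hin (by rw [hcond, ← hp])
      subst hkeq
      rw [if_pos hcond] at he
      rw [he, hsT]
      -- distFn P i + distFn P j ≤ distFn Q i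
      have hjQ : j < Nf Q i := by omega
      have hnest : Nf Q j ≤ Nf Q i := nest Q hQ i j (by omega) (by omega) hjQ
      have hlej := hle j hjn
      omega
    · rw [if_neg hcond] at he
      rw [he]
      simp only [Nat.add_zero]
      exact hle k hk'
  · -- measure decreases
    apply Finset.sum_lt_sum
    · intro k hk
      simp only [Finset.mem_range] at hk
      have he := rotation_effect A S B hSdyck hSne hprimS (hPdec ▸ hP) k
        (by rw [← hPdec]; exact hk)
      rw [← hPdec] at he
      rw [he]
      split <;> omega
    · refine ⟨i, Finset.mem_range.2 hin, ?_⟩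
      have he := rotation_effect A S B hSdyck hSne hprimS (hPdec ▸ hP) i
        (by rw [← hPdec]; exact hin)
      rw [← hPdec] at he
      rw [hAlen, show f - 1 + 1 = f by omega] at he
      rw [if_pos (by rw [← hp])] at he
      have hsT : S.count true = distFn P j := by
        have e1 : S.count true = cntT P f2 - cntT P f := by
          rw [hS, cntT_slice, show f + (f2 - f) = f2 by omega]
        omega
      rw [he]
      omega

lemma rot_invariants (P Q : List Bool) (h : Rotation P Q) (hP : IsDyckWord P) :
    IsDyckWord Q ∧ Q.length = P.length ∧ Q.count true = P.count true ∧
      ∀ k < P.count true, distFn P k ≤ distFn Q k := by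
  obtain ⟨A, S, B, hS, hSne, hprim, hPe, hQe⟩ := h
  subst hPe; subst hQe
  refine ⟨rot_dyckQ A S B hP hS, by rw [rot_lenP, rot_lenQ], rot_count_true A S B, ?_⟩
  intro k hk
  rw [rotation_effect A S B hS hSne hprim hP k hk]
  exact Nat.le_add_right _ _

lemma forward_chain (P Q : List Bool) (h : Relation.ReflTransGen Rotation P Q)
    (hP : IsDyckWord P) :
    IsDyckWord Q ∧ Q.length = P.length ∧ Q.count true = P.count true ∧
      ∀ k < P.count true, distFn P k ≤ distFn Q k := by
  induction h with
  | refl => exact ⟨hP, rfl, rfl, fun k _ => le_rfl⟩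
  | tail hab hbc ih =>
    obtain ⟨hDb, hlb, hcb, hleb⟩ := ih
    obtain ⟨hDc, hlc, hcc, hlec⟩ := rot_invariants _ _ hbc hDb
    exact ⟨hDc, hlc.trans hlb, hcc.trans hcb, fun k hk =>
      (hleb k hk).trans (hlec k (by omega))⟩

lemma backward_chain (Q : List Bool) (hQ : IsDyckWord Q) :
    ∀ M P, IsDyckWord P → P.length = Q.length →
      (∀ i < P.count true, distFn P i ≤ distFn Q i) →
      (Finset.range (P.count true)).sum (fun m => distFn Q m - distFn P m) ≤ M →
      Relation.ReflTransGen Rotation P Q := by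
  intro M
  induction M with
  | zero =>
    intro P hP hlen hle hsum
    by_cases hne : P = Q
    · exact hne ▸ Relation.ReflTransGen.refl
    · obtain ⟨P', _, _, _, _, _, hdec⟩ := backward_step P Q hP hQ hlen hle hne
      exact absurd hdec (by omega)
  | succ M ih =>
    intro P hP hlen hle hsum
    by_cases hne : P = Q
    · exact hne ▸ Relation.ReflTransGen.refl
    · obtain ⟨P', hrot, hP'd, hP'l, hP'c, hle', hdec⟩ :=
        backward_step P Q hP hQ hlen hle hne
      refine Relation.ReflTransGen.head hrot (ih P' hP'd (hP'l.trans hlen) ?_ ?_)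
      · intro m hm
        exact hle' m hm
      · rw [hP'c]
        omega

end Tam

/-- For Dyck paths P, Q of size n, P ≤ Q in the Tamari lattice (the reflexive-transitive
closure of the rotation relation) iff D_P(i) ≤ D_Q(i) for all ranks i. -/
theorem tamari_le_iff_distFn_le (n : ℕ) (P Q : List Bool)
    (hP : IsDyckWord P) (hQ : IsDyckWord Q)
    (hPn : P.length = 2*n) (hQn : Q.length = 2*n) :
    Relation.ReflTransGen Rotation P Q ↔ ∀ i < n, distFn P i ≤ distFn Q i := by
  have hPc : P.count true = n := by
    have := Tam.two_mul_count_true P hP; omega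
  have hQc : Q.count true = n := by
    have := Tam.two_mul_count_true Q hQ; omega
  constructor
  · intro h i hi
    exact (Tam.forward_chain P Q h hP).2.2.2 i (by omega)
  · intro h
    exact Tam.backward_chain Q hQ
      ((Finset.range (P.count true)).sum fun m => distFn Q m - distFn P m) P hP
      (by omega) (fun i hi => h i (by omega)) le_rfl
end
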